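/- Combinatorial wall-crossing formula: let τ_1 and τ_2 be adjacent Φ-topes with τ_1 ⊆ c(Φ), let H be their common wall, and let A be the set of i such that φ_i lies in the open side of H containing τ_1. Then X(Φ,τ_1) = X(Φ,τ_2) − (−1)^{|A|} · Flip_A X(Φ_flip^A, τ_2) in ℤ[p_1,…,p_N,q_1,…,q_N]. -/

import Mathlib

open scoped Pointwise
open Classical MvPolynomial

noncomputable section

namespace AC

section Defs

variable {E : Type*} [AddCommGroup E] [Module ℝ E]
variable {ι : Type*} [Fintype ι] [DecidableEq ι]

/-- Characteristic function of a set, with values in `ℝ`. -/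
def charFn {α : Type*} (s : Set α) (x : α) : ℝ := if x ∈ s then 1 else 0

/-- The cone of nonnegative linear combinations of `{Ψ i : i ∈ I}`. -/
def coneOf (Ψ : ι → E) (I : Set ι) : Set E :=
  {v | ∃ c : ι → ℝ, (∀ i, 0 ≤ c i) ∧ (∀ i, i ∉ I → c i = 0) ∧ v = ∑ i, c i • Ψ i}

/-- The cone of nonnegative linear combinations of all the `Ψ i`. -/
def fullCone (Ψ : ι → E) : Set E := coneOf Ψ Set.univ

/-- A cone is salient if it contains no line, i.e. `v, -v ∈ C → v = 0`. -/
def Salient (C : Set E) : Prop := ∀ v ∈ C, -v ∈ C → v = 0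

/-- A wall: a hyperplane spanned by `dim E - 1` linearly independent members of `Ψ`. -/
def IsWall (Ψ : ι → E) (H : Submodule ℝ E) : Prop :=
  ∃ S : Finset ι, S.card + 1 = Module.finrank ℝ E ∧
    LinearIndependent ℝ (fun i : {x // x ∈ S} => Ψ i.1) ∧
    H = Submodule.span ℝ (Ψ '' ↑S)

/-- An element is regular when it lies on no wall. -/
def IsRegular (Ψ : ι → E) (μ : E) : Prop :=
  ∀ H : Submodule ℝ E, IsWall Ψ H → μ ∉ H

/-- `G(Ψ,τ)`: generating subsets whose cone contains `τ`. -/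
def Gens (Ψ : ι → E) (τ : Set E) : Set (Finset ι) :=
  {I | Submodule.span ℝ (Ψ '' ↑I) = ⊤ ∧ τ ⊆ coneOf Ψ ↑I}

/-- `I` is basic when `{Ψ i : i ∈ I}` is a basis of `E`. -/
def IsBasic (Ψ : ι → E) (I : Finset ι) : Prop :=
  LinearIndependent ℝ (fun i : {x // x ∈ I} => Ψ i.1) ∧
    Submodule.span ℝ (Ψ '' ↑I) = ⊤

/-- `B(Ψ,τ)`: basic subsets whose cone contains `τ`. -/
def Bases (Ψ : ι → E) (τ : Set E) : Set (Finset ι) :=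
  {I | IsBasic Ψ I ∧ τ ⊆ coneOf Ψ ↑I}

/-- The combinatorial Brianchon-Gram polynomial `X(Ψ,τ)`; the variable `Sum.inl i`
plays the role of `p i` and `Sum.inr i` plays the role of `q i`. -/
def BGpoly (Ψ : ι → E) (τ : Set E) : MvPolynomial (ι ⊕ ι) ℤ :=
  ∑ I : Finset ι,
    if I ∈ Gens Ψ τ then
      (-1 : MvPolynomial (ι ⊕ ι) ℤ) ^ (I.card - Module.finrank ℝ E) *
        ((∏ j ∈ Iᶜ, X (Sum.inl j)) * ∏ i ∈ I, (X (Sum.inl i) + X (Sum.inr i)))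
    else 0

/-- The geometric Brianchon-Gram function `X_geom(Ψ,τ)` on `ℝ^ι`. -/
def XGeom (Ψ : ι → E) (τ : Set E) (x : ι → ℝ) : ℝ :=
  ∑ I : Finset ι,
    if I ∈ Gens Ψ τ then
      (-1 : ℝ) ^ (I.card - Module.finrank ℝ E) *
        ∏ j ∈ Iᶜ, (if 0 ≤ x j then (1 : ℝ) else 0)
    else 0

/-- The affine subspace `V(Ψ,λ)`. -/
def affSlice (Ψ : ι → E) (lam : E) : Set (ι → ℝ) := {x | ∑ i, x i • Ψ i = lam}

/-- The partition polytope `p(Ψ,λ)`. -/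
def partPoly (Ψ : ι → E) (lam : E) : Set (ι → ℝ) :=
  {x | (∀ i, 0 ≤ x i) ∧ ∑ i, x i • Ψ i = lam}

/-- The semi-closed quadrant `Q_neg^B`. -/
def Qneg (B : Finset ι) : Set (ι → ℝ) :=
  {x | (∀ i ∈ B, x i < 0) ∧ ∀ i ∉ B, 0 ≤ x i}

/-- The flipped sequence `Ψ_flip^B`. -/
def flipSeq (Ψ : ι → E) (B : Finset ι) : ι → E := fun i => if i ∈ B then -Ψ i else Ψ i

/-- The zonotope `b(Ψ)`. -/
def zonotope (Ψ : ι → E) : Set E :=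
  {v | ∃ t : ι → ℝ, (∀ i, 0 ≤ t i ∧ t i ≤ 1) ∧ v = ∑ i, t i • Ψ i}

/-- `x ∈ ℝ^ι` is a lattice point when all its coordinates are integers. -/
def isLatticePt (x : ι → ℝ) : Prop := ∀ i, ∃ n : ℤ, x i = (n : ℝ)

/-- `v` lies in the open side of the hyperplane `H` containing `τ`. -/
def InOpenSideOf (H : Submodule ℝ E) (τ : Set E) (v : E) : Prop :=
  ∃ ξ : E →ₗ[ℝ] ℝ, (∀ h ∈ H, ξ h = 0) ∧ (∀ μ ∈ τ, 0 < ξ μ) ∧ 0 < ξ v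

/-- The change of variables exchanging `p i` and `q i` for `i ∈ A`. -/
def flipVar (A : Finset ι) : ι ⊕ ι → ι ⊕ ι
  | Sum.inl i => if i ∈ A then Sum.inr i else Sum.inl i
  | Sum.inr i => if i ∈ A then Sum.inl i else Sum.inr i

/-- The ring map `Flip_A`, exchanging `p i` and `q i` for `i ∈ A`. -/
def FlipPoly (A : Finset ι) (P : MvPolynomial (ι ⊕ ι) ℤ) : MvPolynomial (ι ⊕ ι) ℤ :=
  MvPolynomial.rename (flipVar A) P

/-- Value substituted for the variable `p i` in the substitution `Geom_A`. -/
def geomValA (A : Finset ι) (x : ι → ℝ) : ι → ℝ := fun i =>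
  if i ∈ A then (if 0 < x i then 1 else 0) else (if 0 ≤ x i then 1 else 0)

/-- The substitution `Geom_A`: substitute `1 - p i` for `q i`, then `[x i ≥ 0]`
for `p i` if `i ∉ A`, and `[x i > 0]` for `p i` if `i ∈ A`. -/
def GeomA (A : Finset ι) (P : MvPolynomial (ι ⊕ ι) ℤ) (x : ι → ℝ) : ℝ :=
  MvPolynomial.aeval (Sum.elim (geomValA A x) (fun i => 1 - geomValA A x i)) P

/-- The substitution `Geom`: `[x i ≥ 0]` for `p i`, `[x i < 0]` for `q i`. -/
def Geom (P : MvPolynomial (ι ⊕ ι) ℤ) (x : ι → ℝ) : ℝ := GeomA ∅ P x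

/-- The semi-closed flipped partition polytope `p_flip(Ψ,A,λ)`. -/
def pflip (Ψ : ι → E) (A : Finset ι) (lam : E) : Set (ι → ℝ) :=
  {x | (∑ i, x i • Ψ i = lam) ∧ (∀ i ∈ A, x i < 0) ∧ ∀ i ∉ A, 0 ≤ x i}

/-- The linear map `x ↦ ∑ i, x i • Ψ i`. -/
def Mmap (Ψ : ι → E) : (ι → ℝ) →ₗ[ℝ] E where
  toFun x := ∑ i, x i • Ψ i
  map_add' x y := by simp [add_smul, Finset.sum_add_distrib]
  map_smul' c x := by simp [smul_smul, Finset.smul_sum]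

/-- A polynomial function on a finite-dimensional real vector space. -/
def IsPolynomialFun {W : Type*} [AddCommGroup W] [Module ℝ W] (f : W → ℝ) : Prop :=
  ∃ (n : ℕ) (b : Module.Basis (Fin n) ℝ W) (p : MvPolynomial (Fin n) ℝ),
    ∀ v, f v = MvPolynomial.eval (fun i => b.repr v i) p

/-- `Λ` is a (full) lattice in `W`: the ℤ-span of some ℝ-basis. -/
def IsLattice {W : Type*} [AddCommGroup W] [Module ℝ W] (Λ : AddSubgroup W) : Prop :=
  ∃ b : Module.Basis (Fin (Module.finrank ℝ W)) ℝ W,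
    ∀ v, v ∈ Λ ↔ ∀ i, ∃ n : ℤ, b.repr v i = (n : ℝ)

/-- Quasi-polynomial function on the lattice `Λ`: polynomial on each coset of
a finite-index sublattice (here `D • Λ`). -/
def IsQuasiPolynomialOn {W : Type*} [AddCommGroup W] [Module ℝ W]
    (Λ : AddSubgroup W) (f : W → ℝ) : Prop :=
  ∃ D : ℕ, 0 < D ∧ ∀ lam₀ ∈ Λ, ∃ P : W → ℝ, IsPolynomialFun P ∧
    ∀ lam' ∈ Λ, f (lam₀ + D • lam') = P (lam₀ + D • lam')

end Defs

section Topes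

variable {E : Type*} [AddCommGroup E] [Module ℝ E] [TopologicalSpace E]
variable {ι : Type*} [Fintype ι]

/-- A tope: a connected component of the set of regular elements. -/
def IsTope (Ψ : ι → E) (τ : Set E) : Prop :=
  ∃ μ, IsRegular Ψ μ ∧ τ = connectedComponentIn {x | IsRegular Ψ x} μ

/-- Two topes are adjacent along the wall `H` when the intersection of their
closures is contained in `H` and spans `H`. -/
def Adjacent (Ψ : ι → E) (τ₁ τ₂ : Set E) (H : Submodule ℝ E) : Prop :=
  IsTope Ψ τ₁ ∧ IsTope Ψ τ₂ ∧ τ₁ ≠ τ₂ ∧ IsWall Ψ H ∧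
    closure τ₁ ∩ closure τ₂ ⊆ (H : Set E) ∧
    Submodule.span ℝ (closure τ₁ ∩ closure τ₂) = H

end Topes

section Aux
set_option linter.unusedSectionVars false

variable {ι : Type*} [Fintype ι] [DecidableEq ι]
variable {F : Type*} [NormedAddCommGroup F] [NormedSpace ℝ F] [FiniteDimensional ℝ F]

lemma coneOf_mono {Ψ : ι → F} {s t : Set ι} (h : s ⊆ t) : coneOf Ψ s ⊆ coneOf Ψ t := by
  rintro v ⟨c, h1, h2, h3⟩
  exact ⟨c, h1, fun i hi => h2 i (fun hs => hi (h hs)), h3⟩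

lemma coneOf_congr {Ψ Ψ' : ι → F} {s : Set ι} (h : ∀ i ∈ s, Ψ i = Ψ' i) :
    coneOf Ψ s = coneOf Ψ' s := by
  have key : ∀ (Ψ Ψ' : ι → F), (∀ i ∈ s, Ψ i = Ψ' i) → coneOf Ψ s ⊆ coneOf Ψ' s := by
    rintro Ψ₀ Ψ₀' h0 v ⟨c, h1, h2, h3⟩
    refine ⟨c, h1, h2, h3.trans (Finset.sum_congr rfl fun i _ => ?_)⟩
    by_cases hi : i ∈ s
    · rw [h0 i hi]
    · rw [h2 i hi]; simp
  exact le_antisymm (key _ _ h) (key _ _ fun i hi => (h i hi).symm)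

lemma zero_mem_coneOf {Ψ : ι → F} {s : Set ι} : (0 : F) ∈ coneOf Ψ s :=
  ⟨0, fun _ => le_rfl, fun _ _ => rfl, by simp⟩

lemma add_smul_mem_coneOf {Ψ : ι → F} {s : Set ι} {v : F} (hv : v ∈ coneOf Ψ s)
    {i : ι} (hi : i ∈ s) {t : ℝ} (ht : 0 ≤ t) : v + t • Ψ i ∈ coneOf Ψ s := by
  obtain ⟨c, h1, h2, h3⟩ := hv
  refine ⟨fun j => c j + if j = i then t else 0,
    fun j => add_nonneg (h1 j) (by split <;> simp [ht]),
    fun j hj => ?_, ?_⟩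
  · have hji : j ≠ i := fun h => hj (h ▸ hi)
    simp [h2 j hj, hji]
  · have h4 : t • Ψ i = ∑ j : ι, (if j = i then t else 0) • Ψ j := by
      rw [Finset.sum_eq_single i] <;> simp +contextual
    rw [h3, h4, ← Finset.sum_add_distrib]
    exact Finset.sum_congr rfl fun j _ => by rw [add_smul]

lemma sum_mem_coneOf {Ψ : ι → F} {s : Set ι} {J : Finset ι} (hJ : ↑J ⊆ s)
    {c : ι → ℝ} (hc : ∀ j ∈ J, 0 ≤ c j) : (∑ j ∈ J, c j • Ψ j) ∈ coneOf Ψ s := by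
  refine ⟨fun i => if i ∈ J then c i else 0, fun i => ?_, fun i hi => ?_, ?_⟩
  · by_cases h : i ∈ J <;> simp [h]
    exact hc i h
  · have : i ∉ J := fun h => hi (hJ h)
    simp [this]
  · calc ∑ j ∈ J, c j • Ψ j = ∑ j ∈ J, (if j ∈ J then c j else 0) • Ψ j :=
        Finset.sum_congr rfl fun j hj => by rw [if_pos hj]
    _ = ∑ i : ι, (if i ∈ J then c i else 0) • Ψ i :=
        Finset.sum_subset (Finset.subset_univ J) (fun x _ hx => by simp [hx])

lemma mem_coneOf_sum_pos {Ψ : ι → F} {s : Set ι} {v : F} (hv : v ∈ coneOf Ψ s) :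
    ∃ (J : Finset ι) (d : ι → ℝ), ↑J ⊆ s ∧
      LinearIndependent ℝ (fun j : {x // x ∈ J} => Ψ j.1) ∧
      (∀ i, 0 ≤ d i) ∧ (∀ i, i ∉ J → d i = 0) ∧ (∀ j ∈ J, 0 < d j) ∧
      v = ∑ i, d i • Ψ i := by
  obtain ⟨c, h1, h2, h3⟩ := hv
  subst h3
  suffices H : ∀ (n : ℕ) (c : ι → ℝ), (Finset.univ.filter fun i => c i ≠ 0).card ≤ n →
      (∀ i, 0 ≤ c i) →
      ∃ (J : Finset ι) (d : ι → ℝ),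
        LinearIndependent ℝ (fun j : {x // x ∈ J} => Ψ j.1) ∧
        (∀ i, 0 ≤ d i) ∧ (∀ i, i ∉ J → d i = 0) ∧ (∀ j ∈ J, 0 < d j) ∧
        (∀ i, d i ≠ 0 → c i ≠ 0) ∧
        ∑ i, d i • Ψ i = ∑ i, c i • Ψ i by
    obtain ⟨J, d, hLI, hd0, hdJ, hdpos, hsupp, hsum⟩ :=
      H (Finset.univ.filter fun i => c i ≠ 0).card c le_rfl h1
    refine ⟨J, d, fun j hj => ?_, hLI, hd0, hdJ, hdpos, hsum.symm⟩
    by_contra hjs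
    exact hsupp j (ne_of_gt (hdpos j hj)) (h2 j hjs)
  clear h1 h2 c
  intro n
  induction n with
  | zero =>
    intro c hcard hc0
    have hc : ∀ i, c i = 0 := by
      intro i
      by_contra hi
      have hmem : i ∈ Finset.univ.filter fun i => c i ≠ 0 := by simp [hi]
      have := Finset.card_pos.mpr ⟨i, hmem⟩
      omega
    exact ⟨∅, 0, linearIndependent_empty_type, fun i => le_rfl, fun _ _ => rfl, by simp, by simp,
      by simp [hc]⟩
  | succ n ih =>
    intro c hcard hc0
    set S := Finset.univ.filter fun i => c i ≠ 0 with hS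
    by_cases hLI : LinearIndependent ℝ (fun j : {x // x ∈ S} => Ψ j.1)
    · refine ⟨S, c, hLI, hc0, ?_, ?_, fun i hi => by simpa [hS] using hi, rfl⟩
      · intro i hi
        by_contra h
        exact hi (by simp [hS, h])
      · intro j hj
        have : c j ≠ 0 := by simpa [hS] using hj
        exact lt_of_le_of_ne (hc0 j) (Ne.symm this)
    · rw [Fintype.linearIndependent_iff] at hLI
      push_neg at hLI
      obtain ⟨g, hgsum, j₁, hj₁⟩ := hLI
      set g' : ι → ℝ := fun i => if h : i ∈ S then g ⟨i, h⟩ else 0 with hg'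
      have hg'sum : ∑ i, g' i • Ψ i = 0 := by
        rw [← Finset.sum_subset (Finset.subset_univ S)
          (fun x _ hx => by simp [hg', dif_neg hx])]
        rw [← Finset.sum_coe_sort S (fun i => g' i • Ψ i), ← hgsum]
        exact Finset.sum_congr rfl fun j _ => by simp [hg', dif_pos j.2]
      have hg'supp : ∀ i, g' i ≠ 0 → c i ≠ 0 := by
        intro i hi
        by_contra h
        have : i ∉ S := by simp [hS, h]
        simp [hg', dif_neg this] at hi
      have main : ∀ g₀ : ι → ℝ, (∑ i, g₀ i • Ψ i = 0) → (∀ i, g₀ i ≠ 0 → c i ≠ 0) →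
          (∃ i, 0 < g₀ i) →
          ∃ (J : Finset ι) (d : ι → ℝ),
            LinearIndependent ℝ (fun j : {x // x ∈ J} => Ψ j.1) ∧
            (∀ i, 0 ≤ d i) ∧ (∀ i, i ∉ J → d i = 0) ∧ (∀ j ∈ J, 0 < d j) ∧
            (∀ i, d i ≠ 0 → c i ≠ 0) ∧
            ∑ i, d i • Ψ i = ∑ i, c i • Ψ i := by
        rintro g₀ hg₀sum hg₀supp ⟨i₁, hi₁⟩
        set T := Finset.univ.filter fun i => 0 < g₀ i with hT
        have HT : T.Nonempty := ⟨i₁, by simp [hT, hi₁]⟩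
        obtain ⟨i₀, hi₀T, hi₀min⟩ := T.exists_min_image (fun i => c i / g₀ i) HT
        have hgi₀ : 0 < g₀ i₀ := by simpa [hT] using hi₀T
        set t := c i₀ / g₀ i₀ with ht
        have ht0 : 0 ≤ t := div_nonneg (hc0 i₀) hgi₀.le
        set c' : ι → ℝ := fun i => c i - t * g₀ i with hc'
        have hc'0 : ∀ i, 0 ≤ c' i := by
          intro i
          by_cases hiT : i ∈ T
          · have hgi : 0 < g₀ i := by simpa [hT] using hiT
            have hmin : t ≤ c i / g₀ i := hi₀min i hiT
            have : t * g₀ i ≤ (c i / g₀ i) * g₀ i :=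
              mul_le_mul_of_nonneg_right hmin hgi.le
            rw [div_mul_cancel₀ _ (ne_of_gt hgi)] at this
            simp only [hc']; linarith
          · have hgi : g₀ i ≤ 0 := by
              by_contra h
              exact hiT (by simp [hT]; linarith)
            have h5 : 0 ≤ -(t * g₀ i) := by
              rw [neg_nonneg]
              exact mul_nonpos_of_nonneg_of_nonpos ht0 hgi
            have := hc0 i
            simp only [hc']; linarith
        have hc'supp : ∀ i, c' i ≠ 0 → c i ≠ 0 := by
          intro i hi
          by_contra h
          rcases eq_or_ne (g₀ i) 0 with hg | hg
          · simp [hc', h, hg] at hi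
          · exact (hg₀supp i hg) h
        have hc'i₀ : c' i₀ = 0 := by
          simp only [hc', ht]
          field_simp; ring
        have hsub : (Finset.univ.filter fun i => c' i ≠ 0) ⊆
            (Finset.univ.filter fun i => c i ≠ 0).erase i₀ := by
          intro i hi
          have hh1 : c' i ≠ 0 := by simpa using hi
          exact Finset.mem_erase.mpr ⟨fun h => hh1 (h ▸ hc'i₀), by simp [hc'supp i hh1]⟩
        have hcard' : (Finset.univ.filter fun i => c' i ≠ 0).card ≤ n := by
          have hh1 := Finset.card_le_card hsub
          have hmem : i₀ ∈ Finset.univ.filter fun i => c i ≠ 0 := by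
            simp [hg₀supp i₀ (ne_of_gt hgi₀)]
          have hh2 := Finset.card_erase_of_mem hmem
          have hh3 : (Finset.univ.filter fun i => c i ≠ 0).card ≤ n + 1 := hcard
          omega
        obtain ⟨J, d, hLI', hd0, hdJ, hdpos, hsupp, hsum⟩ := ih c' hcard' hc'0
        refine ⟨J, d, hLI', hd0, hdJ, hdpos, fun i hi => hc'supp i (hsupp i hi), ?_⟩
        rw [hsum]
        have : ∑ i, c' i • Ψ i = ∑ i, c i • Ψ i - t • ∑ i, g₀ i • Ψ i := by
          rw [Finset.smul_sum, ← Finset.sum_sub_distrib]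
          exact Finset.sum_congr rfl fun i _ => by
            simp only [hc', sub_smul, smul_smul]
        rw [this, hg₀sum, smul_zero, sub_zero]
      by_cases hpos : ∃ i, 0 < g' i
      · exact main g' hg'sum hg'supp hpos
      · push_neg at hpos
        refine main (-g') (by simpa using hg'sum) (fun i hi => hg'supp i (by simpa using hi)) ?_
        have : ∃ i, g' i ≠ 0 := by
          refine ⟨j₁, ?_⟩
          simp only [hg', dif_pos j₁.2]
          exact hj₁
        obtain ⟨i, hi⟩ := this
        exact ⟨i, by simpa using lt_of_le_of_ne (hpos i) hi⟩

end Aux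
section Aux2
set_option linter.unusedSectionVars false
set_option maxHeartbeats 1000000

variable {ι : Type*} [Fintype ι] [DecidableEq ι]
variable {F : Type*} [NormedAddCommGroup F] [NormedSpace ℝ F] [FiniteDimensional ℝ F]

lemma isClosed_coneOf_li {Ψ : ι → F} {J : Finset ι}
    (h : LinearIndependent ℝ (fun j : {x // x ∈ J} => Ψ j.1)) :
    IsClosed (coneOf Ψ (↑J : Set ι)) := by
  set M : ({x // x ∈ J} → ℝ) →ₗ[ℝ] F := Mmap (fun j : {x // x ∈ J} => Ψ j.1) with hM
  have hMapply : ∀ x, M x = ∑ j : {x // x ∈ J}, x j • Ψ j.1 := fun x => rfl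
  have hker : LinearMap.ker M = ⊥ := by
    rw [LinearMap.ker_eq_bot']
    intro x hx
    rw [hMapply] at hx
    funext j
    exact Fintype.linearIndependent_iff.mp h x hx j
  have hemb := M.isClosedEmbedding_of_injective hker
  have horth : IsClosed {x : {x // x ∈ J} → ℝ | ∀ j, 0 ≤ x j} := by
    have : {x : {x // x ∈ J} → ℝ | ∀ j, 0 ≤ x j} = ⋂ j, {x | 0 ≤ x j} := by
      ext x; simp [Set.mem_iInter]
    rw [this]
    exact isClosed_iInter fun j => isClosed_le continuous_const (continuous_apply j)
  have himg : coneOf Ψ (↑J : Set ι) = M '' {x | ∀ j, 0 ≤ x j} := by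
    ext v
    constructor
    · rintro ⟨c, h1, h2, h3⟩
      refine ⟨fun j => c j.1, fun j => h1 j.1, ?_⟩
      rw [hMapply]
      rw [h3]
      rw [Finset.sum_coe_sort J (fun i => c i • Ψ i)]
      exact Finset.sum_subset (Finset.subset_univ J)
        (fun x _ hx => by simp [h2 x (by simpa using hx)])
    · rintro ⟨x, hx, rfl⟩
      rw [hMapply]
      have : ∑ j : {x // x ∈ J}, x j • Ψ j.1
          = ∑ i ∈ J, (fun i => if h : i ∈ J then x ⟨i, h⟩ else 0) i • Ψ i := by
        rw [← Finset.sum_coe_sort J]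
        exact Finset.sum_congr rfl fun j _ => by simp [j.2]
      rw [this]
      refine sum_mem_coneOf subset_rfl fun j hj => ?_
      simp only [dif_pos hj]
      exact hx _
  rw [himg]
  exact hemb.isClosedMap _ horth

lemma isClosed_coneOf (Ψ : ι → F) (s : Set ι) : IsClosed (coneOf Ψ s) := by
  have : coneOf Ψ s = ⋃ (J : Finset ι),
      (if (↑J ⊆ s ∧ LinearIndependent ℝ (fun j : {x // x ∈ J} => Ψ j.1))
        then coneOf Ψ (↑J : Set ι) else ∅) := by
    ext v
    simp only [Set.mem_iUnion]
    constructor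
    · intro hv
      obtain ⟨J, d, hJs, hLI, hd0, hdJ, hdpos, hsum⟩ := mem_coneOf_sum_pos hv
      refine ⟨J, ?_⟩
      rw [if_pos ⟨hJs, hLI⟩]
      exact ⟨d, hd0, fun i hi => hdJ i (by simpa using hi), hsum⟩
    · rintro ⟨J, hJ⟩
      split at hJ
      · next h => exact coneOf_mono h.1 hJ
      · exact absurd hJ (Set.notMem_empty v)
  rw [this]
  refine isClosed_iUnion_of_finite fun J => ?_
  split
  · next h => exact isClosed_coneOf_li h.2
  · exact isClosed_empty

lemma walls_finite (Φ : ι → F) : {H : Submodule ℝ F | IsWall Φ H}.Finite := by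
  refine Set.Finite.subset (Set.finite_range fun S : Finset ι => Submodule.span ℝ (Φ '' ↑S)) ?_
  rintro H ⟨S, _, _, rfl⟩
  exact ⟨S, rfl⟩

lemma isOpen_regulars (Φ : ι → F) : IsOpen {x : F | IsRegular Φ x} := by
  have : {x : F | IsRegular Φ x} = ⋂ H ∈ {H : Submodule ℝ F | IsWall Φ H}, (↑H : Set F)ᶜ := by
    ext x
    simp only [Set.mem_iInter, Set.mem_setOf_eq, Set.mem_compl_iff, SetLike.mem_coe]
    rfl
  rw [this]
  exact (walls_finite Φ).isOpen_biInter fun H _ =>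
    (Submodule.closed_of_finiteDimensional H).isOpen_compl

lemma span_pm {Ψ Φ : ι → F} (h : ∀ i, Ψ i = Φ i ∨ Ψ i = -Φ i) (s : Set ι) :
    Submodule.span ℝ (Ψ '' s) = Submodule.span ℝ (Φ '' s) := by
  apply le_antisymm <;> rw [Submodule.span_le] <;> rintro x ⟨i, hi, rfl⟩
  · rcases h i with h' | h' <;> rw [h']
    · exact Submodule.subset_span ⟨i, hi, rfl⟩
    · exact Submodule.neg_mem _ (Submodule.subset_span ⟨i, hi, rfl⟩)
  · rcases h i with h' | h'
    · rw [← h']; exact Submodule.subset_span ⟨i, hi, rfl⟩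
    · have : Φ i = -Ψ i := by rw [h', neg_neg]
      rw [this]
      exact Submodule.neg_mem _ (Submodule.subset_span ⟨i, hi, rfl⟩)

lemma exists_functional {V : Submodule ℝ F} {e : F} (he : e ∉ V) :
    ∃ ℓ : F →ₗ[ℝ] ℝ, (∀ v ∈ V, ℓ v = 0) ∧ ℓ e ≠ 0 := by
  obtain ⟨f, hfe, hfV⟩ := Submodule.exists_dual_map_eq_bot_of_notMem he inferInstance
  refine ⟨f, fun v hv => ?_, hfe⟩
  have : f v ∈ Submodule.map f V := Submodule.mem_map_of_mem hv
  rw [hfV] at this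
  simpa using this

lemma wall_finrank {Φ : ι → F} {H : Submodule ℝ F} (hW : IsWall Φ H) :
    Module.finrank ℝ H + 1 = Module.finrank ℝ F := by
  obtain ⟨S, hcard, hLI, rfl⟩ := hW
  have h1 : Φ '' ↑S = Set.range fun j : {x // x ∈ S} => Φ j.1 := Set.image_eq_range _ _
  rw [h1, finrank_span_eq_card hLI]
  rw [Fintype.card_coe]
  exact hcard

lemma wall_ne_top {Φ : ι → F} {H : Submodule ℝ F} (hW : IsWall Φ H) : H ≠ ⊤ := by
  intro h
  have h1 := wall_finrank hW
  rw [h] at h1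
  rw [finrank_top] at h1
  omega

lemma ker_eq_hyperplane {H : Submodule ℝ F} (hH : Module.finrank ℝ H + 1 = Module.finrank ℝ F)
    {ℓ : F →ₗ[ℝ] ℝ} (hvan : ∀ v ∈ H, ℓ v = 0) (hne : ℓ ≠ 0) : LinearMap.ker ℓ = H := by
  have hle : H ≤ LinearMap.ker ℓ := fun v hv => by
    rw [LinearMap.mem_ker]; exact hvan v hv
  have hker_ne : LinearMap.ker ℓ ≠ ⊤ := fun h => hne (LinearMap.ker_eq_top.mp h)
  have h1 : Module.finrank ℝ (LinearMap.ker ℓ) < Module.finrank ℝ F :=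
    Submodule.finrank_lt hker_ne
  have h2 : Module.finrank ℝ H ≤ Module.finrank ℝ (LinearMap.ker ℓ) :=
    Submodule.finrank_mono hle
  exact (Submodule.eq_of_le_of_finrank_eq hle (by omega)).symm

end Aux2
section Aux3
set_option linter.unusedSectionVars false
set_option maxHeartbeats 1000000

variable {ι : Type*} [Fintype ι] [DecidableEq ι]
variable {F : Type*} [NormedAddCommGroup F] [NormedSpace ℝ F] [FiniteDimensional ℝ F]

lemma exists_not_mem_submodule {V : Submodule ℝ F} (h : V ≠ ⊤) : ∃ e, e ∉ V := by
  by_contra hc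
  push_neg at hc
  exact h (Submodule.eq_top_iff'.mpr hc)

/-- Every wall admits a linear functional with the wall as exact kernel. -/
lemma wall_ker {Φ : ι → F} {H : Submodule ℝ F} (hW : IsWall Φ H) :
    ∃ ℓ : F →ₗ[ℝ] ℝ, LinearMap.ker ℓ = H := by
  obtain ⟨e, he⟩ := exists_not_mem_submodule (wall_ne_top hW)
  obtain ⟨ℓ, hvan, hne0⟩ := exists_functional he
  exact ⟨ℓ, ker_eq_hyperplane (wall_finrank hW) hvan (fun h => hne0 (by simp [h]))⟩

/-- A linearly independent subset of `range Φ` spanning a proper subspace is contained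
in a wall. -/
lemma exists_wall_superset {Φ : ι → F} (hgen : Submodule.span ℝ (Set.range Φ) = ⊤)
    {T : Set F} (hT : T ⊆ Set.range Φ) (hne : Submodule.span ℝ T ≠ ⊤) :
    ∃ H : Submodule ℝ F, IsWall Φ H ∧ T ⊆ ↑H := by
  classical
  obtain ⟨s, hsT, hsspan, hsLI⟩ := exists_linearIndependent ℝ T
  obtain ⟨b, hbr, hsb, hrb, hbLI'⟩ := exists_linearIndepOn_id_extension hsLI (hsT.trans hT)
  have hbLI : LinearIndependent ℝ (Subtype.val : b → F) := hbLI'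
  have hbspan : Submodule.span ℝ b = ⊤ := by
    rw [← top_le_iff, ← hgen]
    exact Submodule.span_le.mpr hrb
  have hbfin : b.Finite := by
    have : Finite b := hbLI.finite
    exact Set.toFinite b
  haveI : Fintype b := hbfin.fintype
  have hbcard : b.toFinset.card = Module.finrank ℝ F := by
    have := finrank_span_set_eq_card hbLI
    rw [hbspan, finrank_top] at this
    omega
  have hsnb : s ≠ b := by
    intro h
    rw [h, hbspan] at hsspan
    exact hne hsspan.symm
  obtain ⟨v, hvb, hvs⟩ := Set.exists_of_ssubset (ssubset_of_subset_of_ne hsb hsnb)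
  set b' : Set F := b \ {v} with hb'
  have hb'sub : b' ⊆ b := Set.diff_subset
  have hb'LI : LinearIndependent ℝ (Subtype.val : b' → F) := hbLI'.mono hb'sub
  haveI : Fintype b' := Set.Finite.fintype (hbfin.subset hb'sub)
  have hsb' : s ⊆ b' := fun x hx => ⟨hsb hx, fun h => hvs (h ▸ hx)⟩
  have hb'card : b'.toFinset.card + 1 = Module.finrank ℝ F := by
    have h1 : b'.toFinset = b.toFinset.erase v := by
      ext x
      simp [hb', and_comm]
    rw [h1, Finset.card_erase_of_mem (by simpa using hvb)]
    have h2 : 0 < b.toFinset.card := Finset.card_pos.mpr ⟨v, by simpa using hvb⟩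
    omega
  -- choose indices for elements of b'
  have hchoice : ∀ w : b', ∃ i : ι, Φ i = (w : F) := fun w => hbr (hb'sub w.2)
  choose g hg using hchoice
  have hginj : Function.Injective g := fun w w' h => by
    apply Subtype.ext
    rw [← hg w, ← hg w', h]
  set S : Finset ι := Finset.univ.image g with hS
  have hScard : S.card = b'.toFinset.card := by
    rw [hS, Finset.card_image_of_injective _ hginj, Finset.card_univ]
    simp [Set.toFinset_card]
  have hSim : Φ '' ↑S = b' := by
    ext x
    constructor
    · rintro ⟨i, hi, rfl⟩
      simp only [hS, Finset.coe_image, Set.mem_image] at hi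
      obtain ⟨w, _, rfl⟩ := hi
      rw [hg w]
      exact w.2
    · intro hx
      exact ⟨g ⟨x, hx⟩, by simp [hS], hg ⟨x, hx⟩⟩
  have hΦinjS : ∀ i ∈ S, ∀ j ∈ S, Φ i = Φ j → i = j := by
    intro i hi j hj hij
    simp only [hS, Finset.mem_image, Finset.mem_univ, true_and] at hi hj
    obtain ⟨w, rfl⟩ := hi
    obtain ⟨w', rfl⟩ := hj
    rw [hg w, hg w'] at hij
    exact congrArg g (Subtype.ext hij)
  have hSLI : LinearIndependent ℝ (fun i : {x // x ∈ S} => Φ i.1) := by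
    have he : ∀ i : {x // x ∈ S}, Φ i.1 ∈ b' := fun i => by
      rw [← hSim]; exact ⟨i.1, i.2, rfl⟩
    set e : {x // x ∈ S} → b' := fun i => ⟨Φ i.1, he i⟩ with hee
    have heinj : Function.Injective e := by
      intro i j hij
      apply Subtype.ext
      exact hΦinjS i.1 i.2 j.1 j.2 (congrArg Subtype.val hij)
    have : (fun i : {x // x ∈ S} => Φ i.1) = Subtype.val ∘ e := rfl
    rw [this]
    exact hb'LI.comp e heinj
  refine ⟨Submodule.span ℝ (Φ '' ↑S), ⟨S, by omega, hSLI, rfl⟩, ?_⟩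
  rw [hSim]
  have h1 : T ⊆ ↑(Submodule.span ℝ T) := Submodule.subset_span
  have h2 : Submodule.span ℝ T = Submodule.span ℝ s := by rw [hsspan]
  intro x hx
  have := h1 hx
  rw [h2] at this
  exact Submodule.span_mono hsb' this

/-- basic facts about topes -/
lemma tope_facts {Φ : ι → F} {τ : Set F} (ht : IsTope Φ τ) :
    τ ⊆ {x | IsRegular Φ x} ∧ IsOpen τ ∧ τ.Nonempty ∧ IsPreconnected τ ∧
      Convex ℝ τ ∧ (∀ x ∈ τ, ∀ t : ℝ, 0 < t → t • x ∈ τ) := by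
  classical
  obtain ⟨μ₀, hμ₀, rfl⟩ := ht
  refine ⟨connectedComponentIn_subset _ _, (isOpen_regulars Φ).connectedComponentIn,
    ⟨μ₀, mem_connectedComponentIn hμ₀⟩, isPreconnected_connectedComponentIn, ?_⟩
  have hker : ∀ H : Submodule ℝ F, IsWall Φ H → ∃ ℓ : F →ₗ[ℝ] ℝ, LinearMap.ker ℓ = H :=
    fun H hH => wall_ker hH
  choose ℓfn hℓfn using hker
  set P : Set F := {x | ∀ (H : Submodule ℝ F) (hH : IsWall Φ H),
    0 < ℓfn H hH x * ℓfn H hH μ₀} with hP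
  have hμ₀P : μ₀ ∈ P := by
    intro H hH
    have : ℓfn H hH μ₀ ≠ 0 := by
      intro h
      exact hμ₀ H hH (by rw [← hℓfn H hH]; exact h)
    exact mul_self_pos.mpr this
  have hPreg : P ⊆ {x | IsRegular Φ x} := by
    intro x hx H hH
    have h1 := hx H hH
    have h2 : ℓfn H hH x ≠ 0 := by
      intro h
      rw [h, zero_mul] at h1
      exact lt_irrefl 0 h1
    rw [← hℓfn H hH]
    exact fun hm => h2 hm
  have hPconv : Convex ℝ P := by
    intro x hx y hy a b ha hb hab
    intro H hH
    have h1 := hx H hH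
    have h2 := hy H hH
    have h3 : ℓfn H hH (a • x + b • y) = a * ℓfn H hH x + b * ℓfn H hH y := by
      rw [map_add, map_smul, map_smul]; rfl
    rw [h3, add_mul]
    rcases eq_or_lt_of_le ha with ha' | ha'
    · have hb1 : b = 1 := by linarith
      rw [← ha', hb1]
      simpa using h2
    · nlinarith
  have hPcone : ∀ x ∈ P, ∀ t : ℝ, 0 < t → t • x ∈ P := by
    intro x hx t htpos H hH
    have h1 := hx H hH
    have h3 : ℓfn H hH (t • x) = t * ℓfn H hH x := by rw [map_smul]; rfl
    rw [h3, mul_assoc]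
    exact mul_pos htpos h1
  have hPopen : IsOpen P := by
    have : P = ⋂ H ∈ {H : Submodule ℝ F | IsWall Φ H},
        ⋂ (hH : IsWall Φ H), {x | 0 < ℓfn H hH x * ℓfn H hH μ₀} := by
      ext x
      simp only [hP, Set.mem_iInter, Set.mem_setOf_eq]
      tauto
    rw [this]
    refine (walls_finite Φ).isOpen_biInter fun H hH => isOpen_iInter_of_finite fun h => ?_
    have hcont : Continuous fun x => ℓfn H h x * ℓfn H h μ₀ :=
      ((ℓfn H h).continuous_of_finiteDimensional).mul continuous_const
    exact isOpen_lt continuous_const hcont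
  have hPsub : P ⊆ connectedComponentIn {x | IsRegular Φ x} μ₀ :=
    (hPconv.isPreconnected).subset_connectedComponentIn hμ₀P hPreg
  have hsubP : connectedComponentIn {x | IsRegular Φ x} μ₀ ⊆ P := by
    intro x hx H hH
    set u : Set F := {y | 0 < ℓfn H hH y * ℓfn H hH μ₀} with hu
    set v : Set F := {y | ℓfn H hH y * ℓfn H hH μ₀ < 0} with hv
    have hcont : Continuous fun y => ℓfn H hH y * ℓfn H hH μ₀ :=
      ((ℓfn H hH).continuous_of_finiteDimensional).mul continuous_const
    have huo : IsOpen u := isOpen_lt continuous_const hcont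
    have hvo : IsOpen v := isOpen_lt hcont continuous_const
    have hdisj : Disjoint u v := by
      rw [Set.disjoint_iff]
      rintro y ⟨h1, h2⟩
      simp only [hu, hv, Set.mem_setOf_eq] at h1 h2
      linarith
    have hsub : connectedComponentIn {x | IsRegular Φ x} μ₀ ⊆ u ∪ v := by
      intro y hy
      have hyreg : IsRegular Φ y := connectedComponentIn_subset _ _ hy
      have h2 : ℓfn H hH y ≠ 0 := by
        intro h
        exact hyreg H hH (by rw [← hℓfn H hH]; exact h)
      have h3 : ℓfn H hH μ₀ ≠ 0 := by
        intro h
        exact hμ₀ H hH (by rw [← hℓfn H hH]; exact h)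
      have : ℓfn H hH y * ℓfn H hH μ₀ ≠ 0 := mul_ne_zero h2 h3
      rcases lt_or_gt_of_ne this with h | h
      · exact Or.inr h
      · exact Or.inl h
    rcases (isPreconnected_connectedComponentIn).subset_or_subset huo hvo hdisj hsub with h | h
    · exact h hx
    · have := h (mem_connectedComponentIn hμ₀)
      have h1 := hμ₀P H hH
      rw [hv] at this
      exact absurd (lt_trans h1 this) (lt_irrefl _)
  have : connectedComponentIn {x | IsRegular Φ x} μ₀ = P :=
    le_antisymm hsubP hPsub
  rw [this]
  exact ⟨hPconv, hPcone⟩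

/-- sign of a nonvanishing functional on a preconnected set is constant -/
lemma sign_const {s : Set F} (hs : IsPreconnected s) {ℓ : F →ₗ[ℝ] ℝ}
    (h0 : ∀ x ∈ s, ℓ x ≠ 0) : (∀ x ∈ s, 0 < ℓ x) ∨ (∀ x ∈ s, ℓ x < 0) := by
  have hcont : Continuous ℓ := ℓ.continuous_of_finiteDimensional
  have huo : IsOpen {y : F | 0 < ℓ y} := isOpen_lt continuous_const hcont
  have hvo : IsOpen {y : F | ℓ y < 0} := isOpen_lt hcont continuous_const
  have hdisj : Disjoint {y : F | 0 < ℓ y} {y : F | ℓ y < 0} := by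
    rw [Set.disjoint_iff]
    rintro y ⟨h1, h2⟩
    simp only [Set.mem_setOf_eq] at h1 h2
    linarith
  have hsub : s ⊆ {y : F | 0 < ℓ y} ∪ {y : F | ℓ y < 0} := by
    intro y hy
    rcases lt_or_gt_of_ne (h0 y hy) with h | h
    · exact Or.inr h
    · exact Or.inl h
  rcases hs.subset_or_subset huo hvo hdisj hsub with h | h
  · exact Or.inl fun x hx => h hx
  · exact Or.inr fun x hx => h hx

/-- closure of a set closed under positive scaling is closed under positive scaling -/
lemma closure_cone {s : Set F} (h : ∀ x ∈ s, ∀ t : ℝ, 0 < t → t • x ∈ s) :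
    ∀ x ∈ closure s, ∀ t : ℝ, 0 < t → t • x ∈ closure s := by
  intro x hx t htpos
  have hcont : Continuous fun y : F => t • y := continuous_const_smul t
  have h1 : t • x ∈ (fun y : F => t • y) '' closure s := ⟨x, hx, rfl⟩
  have h2 := image_closure_subset_closure_image (s := s) hcont h1
  refine closure_mono ?_ h2
  rintro y ⟨z, hz, rfl⟩
  exact h z hz t htpos

lemma zero_mem_closure_cone {s : Set F} (hne : s.Nonempty)
    (h : ∀ x ∈ s, ∀ t : ℝ, 0 < t → t • x ∈ s) : (0 : F) ∈ closure s := by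
  obtain ⟨x, hx⟩ := hne
  rw [mem_closure_iff_seq_limit]
  refine ⟨fun n => (1 / ((n : ℝ) + 1)) • x, fun n => h x hx _ (by positivity), ?_⟩
  have := (tendsto_one_div_add_atTop_nhds_zero_nat (𝕜 := ℝ)).smul_const x
  simpa using this

end Aux3
section Aux4
set_option linter.unusedSectionVars false
set_option maxHeartbeats 1000000

variable {ι : Type*} [Fintype ι] [DecidableEq ι]
variable {F : Type*} [NormedAddCommGroup F] [NormedSpace ℝ F] [FiniteDimensional ℝ F]

/-- All-or-nothing: a tope meeting a cone generated by `±Φ` is contained in it;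
moreover such a cone then spans. -/
lemma tope_subset_coneOf {Φ : ι → F} (hgen : Submodule.span ℝ (Set.range Φ) = ⊤)
    {Ψ : ι → F} (hΨ : ∀ i, Ψ i = Φ i ∨ Ψ i = -Φ i) {s : Set ι} {τ : Set F}
    (ht : IsTope Φ τ) {x : F} (hx : x ∈ τ) (hxC : x ∈ coneOf Ψ s) :
    τ ⊆ coneOf Ψ s ∧ Submodule.span ℝ (Φ '' s) = ⊤ := by
  classical
  obtain ⟨hreg, hopen, hnetope, hconn, hconv, hcone⟩ := tope_facts ht
  have claim : ∀ y ∈ τ ∩ coneOf Ψ s, ∃ O : Set F, IsOpen O ∧ y ∈ O ∧ O ⊆ coneOf Ψ s ∧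
      Submodule.span ℝ (Φ '' s) = ⊤ := by
    rintro y ⟨hyτ, hyC⟩
    have hyreg : IsRegular Φ y := hreg hyτ
    obtain ⟨J, d, hJs, hLI, hd0, hdJ, hdpos, hsum⟩ := mem_coneOf_sum_pos hyC
    have hspanJ : Submodule.span ℝ (Φ '' ↑J) = ⊤ := by
      by_contra hne
      obtain ⟨W, hWwall, hTW⟩ := exists_wall_superset hgen
        (Set.image_subset_range Φ ↑J) hne
      apply hyreg W hWwall
      have hyspan : y ∈ Submodule.span ℝ (Φ '' (↑J : Set ι)) := by
        rw [hsum]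
        refine Submodule.sum_mem _ fun i _ => ?_
        by_cases hiJ : i ∈ J
        · have hmem : Φ i ∈ Submodule.span ℝ (Φ '' (↑J : Set ι)) :=
            Submodule.subset_span ⟨i, hiJ, rfl⟩
          rcases hΨ i with h | h <;> rw [h]
          · exact Submodule.smul_mem _ _ hmem
          · exact Submodule.smul_mem _ _ (Submodule.neg_mem _ hmem)
        · rw [hdJ i hiJ, zero_smul]
          exact Submodule.zero_mem _
      have : Submodule.span ℝ (Φ '' (↑J : Set ι)) ≤ W := Submodule.span_le.mpr hTW
      exact this hyspan
    have hspans : Submodule.span ℝ (Φ '' s) = ⊤ := by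
      rw [← top_le_iff, ← hspanJ]
      exact Submodule.span_mono (Set.image_mono hJs)
    have hrangeim : (Set.range fun j : {x // x ∈ J} => Ψ j.1) = Ψ '' (↑J : Set ι) := by
      ext v
      constructor
      · rintro ⟨j, rfl⟩
        exact ⟨j.1, by simpa using j.2, rfl⟩
      · rintro ⟨i, hi, rfl⟩
        exact ⟨⟨i, by simpa using hi⟩, rfl⟩
    have hspanΨ : ⊤ ≤ Submodule.span ℝ (Set.range fun j : {x // x ∈ J} => Ψ j.1) := by
      rw [hrangeim, span_pm hΨ, hspanJ]
    set bJ : Module.Basis {x // x ∈ J} ℝ F := Module.Basis.mk hLI hspanΨ with hbJ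
    set O : Set F := {z | ∀ j : {x // x ∈ J}, 0 < bJ.repr z j} with hO
    have hOopen : IsOpen O := by
      have : O = ⋂ j : {x // x ∈ J}, {z | 0 < (bJ.coord j) z} := by
        ext z
        simp only [hO, Set.mem_iInter, Set.mem_setOf_eq, Module.Basis.coord_apply]
      rw [this]
      exact isOpen_iInter_of_finite fun j =>
        isOpen_lt continuous_const (bJ.coord j).continuous_of_finiteDimensional
    have hyO : y ∈ O := by
      have hy2 : y = bJ.equivFun.symm (fun j => d j.1) := by
        rw [Module.Basis.equivFun_symm_apply, hsum]
        rw [← Finset.sum_subset (Finset.subset_univ J)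
          (fun x _ hx => by rw [hdJ x (by simpa using hx), zero_smul])]
        rw [← Finset.sum_coe_sort J (fun i => d i • Ψ i)]
        refine Finset.sum_congr rfl fun j _ => ?_
        rw [hbJ, Module.Basis.coe_mk]
      intro j
      have : bJ.repr y j = d j.1 := by
        rw [hy2]
        rw [← Module.Basis.equivFun_apply]
        rw [LinearEquiv.apply_symm_apply]
      rw [this]
      exact hdpos j.1 j.2
    have hOC : O ⊆ coneOf Ψ s := by
      intro z hz
      have hz2 : z = ∑ j : {x // x ∈ J}, bJ.repr z j • Ψ j.1 := by
        conv_lhs => rw [← Module.Basis.sum_repr bJ z]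
        refine Finset.sum_congr rfl fun j _ => ?_
        rw [hbJ, Module.Basis.coe_mk]
      rw [hz2]
      have : ∑ j : {x // x ∈ J}, bJ.repr z j • Ψ j.1
          = ∑ i ∈ J, (fun i => if h : i ∈ J then bJ.repr z ⟨i, h⟩ else 0) i • Ψ i := by
        rw [← Finset.sum_coe_sort J]
        exact Finset.sum_congr rfl fun j _ => by simp [j.2]
      rw [this]
      refine sum_mem_coneOf hJs fun j hj => ?_
      simp only [dif_pos hj]
      exact (hz ⟨j, hj⟩).le
    exact ⟨O, hOopen, hyO, hOC, hspans⟩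
  obtain ⟨O₀, _, _, _, hspans⟩ := claim x ⟨hx, hxC⟩
  refine ⟨?_, hspans⟩
  have hopenTC : IsOpen (τ ∩ coneOf Ψ s) := by
    rw [isOpen_iff_forall_mem_open]
    rintro z hz
    obtain ⟨O, hOopen, hzO, hOC, _⟩ := claim z hz
    exact ⟨τ ∩ O, fun w hw => ⟨hw.1, hOC hw.2⟩, hopen.inter hOopen, hz.1, hzO⟩
  have hCc : IsOpen (coneOf Ψ s)ᶜ := (isClosed_coneOf Ψ s).isOpen_compl
  have hsub : τ ⊆ (τ ∩ coneOf Ψ s) ∪ (coneOf Ψ s)ᶜ := by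
    intro z hz
    by_cases h : z ∈ coneOf Ψ s
    · exact Or.inl ⟨hz, h⟩
    · exact Or.inr h
  have hdisj : Disjoint (τ ∩ coneOf Ψ s) (coneOf Ψ s)ᶜ := by
    rw [Set.disjoint_iff]
    rintro z ⟨⟨_, h1⟩, h2⟩
    exact h2 h1
  rcases hconn.subset_or_subset hopenTC hCc hdisj hsub with h | h
  · exact fun z hz => (h hz).2
  · exact absurd hxC (h hx)

/-- convex cones containing 0 are closed under nonnegative combinations -/
lemma convex_cone_add_mem {s : Set F} (hconv : Convex ℝ s)
    (hcone : ∀ x ∈ s, ∀ t : ℝ, 0 < t → t • x ∈ s) {u v : F} (hu : u ∈ s) (hv : v ∈ s) :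
    u + v ∈ s := by
  have h1 : (1/2 : ℝ) • u + (1/2 : ℝ) • v ∈ s :=
    hconv hu hv (by norm_num) (by norm_num) (by norm_num)
  have h2 := hcone _ h1 2 (by norm_num)
  rw [smul_add, smul_smul, smul_smul] at h2
  norm_num at h2
  exact h2

/-- The main structure lemma for an adjacent pair of topes. -/
lemma adjacent_structure {Φ : ι → F} {τ₁ τ₂ : Set F} {H : Submodule ℝ F}
    (hadj : Adjacent Φ τ₁ τ₂ H) :
    ∃ (ξ : F →ₗ[ℝ] ℝ) (μ : F) (δ : ℝ), 0 < δ ∧ LinearMap.ker ξ = H ∧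
      (∀ y ∈ τ₁, 0 < ξ y) ∧ (∀ y ∈ τ₂, ξ y < 0) ∧
      μ ∈ closure τ₁ ∧ μ ∈ closure τ₂ ∧ ξ μ = 0 ∧
      (∀ z : F, dist z μ < δ → ((0 < ξ z → z ∈ τ₁) ∧ (ξ z < 0 → z ∈ τ₂))) := by
  classical
  obtain ⟨ht1, ht2, hne12, hwall, hsubH, hspanH⟩ := hadj
  obtain ⟨hreg1, hopen1, hne1, hconn1, hconv1, hcone1⟩ := tope_facts ht1
  obtain ⟨hreg2, hopen2, hne2, hconn2, hconv2, hcone2⟩ := tope_facts ht2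
  obtain ⟨ℓ₀, hℓ₀⟩ := wall_ker hwall
  have hτ₁ne : ∀ x ∈ τ₁, ℓ₀ x ≠ 0 := by
    intro x hx h
    exact (hreg1 hx) H hwall (by rw [← hℓ₀]; exact h)
  have hτ₂ne : ∀ x ∈ τ₂, ℓ₀ x ≠ 0 := by
    intro x hx h
    exact (hreg2 hx) H hwall (by rw [← hℓ₀]; exact h)
  -- choose the sign so that ξ > 0 on τ₁
  obtain ⟨ξ, hξker, hξτ₁⟩ : ∃ ξ : F →ₗ[ℝ] ℝ, LinearMap.ker ξ = H ∧ ∀ y ∈ τ₁, 0 < ξ y := by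
    rcases sign_const hconn1 hτ₁ne with h | h
    · exact ⟨ℓ₀, hℓ₀, h⟩
    · refine ⟨-ℓ₀, ?_, fun y hy => by simpa using h y hy⟩
      rw [← hℓ₀]
      ext v
      simp
  -- the common face
  set f : Set F := closure τ₁ ∩ closure τ₂ with hf
  have hfconv : Convex ℝ f := (hconv1.closure).inter (hconv2.closure)
  have hfcone : ∀ x ∈ f, ∀ t : ℝ, 0 < t → t • x ∈ f := by
    rintro x ⟨h1, h2⟩ t ht
    exact ⟨closure_cone hcone1 x h1 t ht, closure_cone hcone2 x h2 t ht⟩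
  have h0f : (0 : F) ∈ f :=
    ⟨zero_mem_closure_cone hne1 hcone1, zero_mem_closure_cone hne2 hcone2⟩
  -- the other walls
  set ws' : Finset (Submodule ℝ F) := (walls_finite Φ).toFinset.erase H with hws'
  have hws'wall : ∀ W ∈ ws', IsWall Φ W ∧ W ≠ H := by
    intro W hW
    rw [hws', Finset.mem_erase] at hW
    exact ⟨(walls_finite Φ).mem_toFinset.mp hW.2, hW.1⟩
  have hwit : ∀ W ∈ ws', ∃ x ∈ f, x ∉ W := by
    intro W hW
    obtain ⟨hWwall, hWne⟩ := hws'wall W hW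
    by_contra hc
    push_neg at hc
    have hfW : f ⊆ ↑W := hc
    have hHW : H ≤ W := by
      rw [← hspanH]
      exact Submodule.span_le.mpr hfW
    have : H = W := by
      refine Submodule.eq_of_le_of_finrank_eq hHW ?_
      have e1 := wall_finrank hwall
      have e2 := wall_finrank hWwall
      omega
    exact hWne this.symm
  -- avoid all other walls within f
  have avoid : ∀ G : Finset (Submodule ℝ F), G ⊆ ws' → ∃ μ ∈ f, ∀ W ∈ G, μ ∉ W := by
    intro G
    induction G using Finset.induction_on with
    | empty => exact fun _ => ⟨0, h0f, by simp⟩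
    | @insert W G hWG ih =>
      intro hins
      obtain ⟨μ, hμf, hμG⟩ := ih (fun V hV => hins (Finset.mem_insert_of_mem hV))
      have hWmem : W ∈ ws' := hins (Finset.mem_insert_self W G)
      obtain ⟨x, hxf, hxW⟩ := hwit W hWmem
      -- functionals for all walls in insert W G
      have hkers : ∀ V ∈ insert W G, ∃ ℓ : F →ₗ[ℝ] ℝ, LinearMap.ker ℓ = V := by
        intro V hV
        exact wall_ker (hws'wall V (hins hV)).1
      choose ℓV hℓV using hkers
      -- the bad set of parameters
      have hbadfin : ∀ (V : Submodule ℝ F) (hV : V ∈ insert W G),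
          Set.Finite {t : ℝ | ℓV V hV μ + t * ℓV V hV x = 0} := by
        intro V hV
        by_cases hcoef : ℓV V hV x = 0
        · have hVG : V ∈ G ∨ V = W := by
            rcases Finset.mem_insert.mp hV with h | h
            · exact Or.inr h
            · exact Or.inl h
          have hμV : ℓV V hV μ ≠ 0 := by
            rcases hVG with h | h
            · intro hc
              exact hμG V h (by rw [← hℓV V hV]; exact hc)
            · subst h
              exact absurd (by rw [← hℓV V hV]; exact hcoef : x ∈ V) hxW
          have : {t : ℝ | ℓV V hV μ + t * ℓV V hV x = 0} = ∅ := by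
            ext t
            simp only [Set.mem_setOf_eq, Set.mem_empty_iff_false, iff_false]
            rw [hcoef, mul_zero, add_zero]
            exact hμV
          rw [this]
          exact Set.finite_empty
        · have : {t : ℝ | ℓV V hV μ + t * ℓV V hV x = 0}
              ⊆ {-(ℓV V hV μ) / (ℓV V hV x)} := by
            intro t ht
            simp only [Set.mem_setOf_eq] at ht
            simp only [Set.mem_singleton_iff]
            field_simp
            linarith
          exact Set.Finite.subset (Set.finite_singleton _) this
      set Bad : Set ℝ := ⋃ V : {V // V ∈ insert W G}, {t : ℝ | ℓV V.1 V.2 μ + t * ℓV V.1 V.2 x = 0}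
        with hBad
      have hBadfin : Bad.Finite := Set.finite_iUnion fun V => hbadfin V.1 V.2
      have : ((Set.Ioi (0:ℝ)) \ Bad).Nonempty := by
        refine Set.Infinite.nonempty (Set.Infinite.diff ?_ hBadfin)
        exact Set.Ioi_infinite 0
      obtain ⟨s, hs0, hsBad⟩ := this
      rw [Set.mem_Ioi] at hs0
      refine ⟨μ + s • x, ?_, ?_⟩
      · exact convex_cone_add_mem hfconv hfcone hμf (hfcone x hxf s hs0)
      · intro V hV hmem
        apply hsBad
        rw [hBad]
        refine Set.mem_iUnion.mpr ⟨⟨V, hV⟩, ?_⟩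
        simp only [Set.mem_setOf_eq]
        have : μ + s • x ∈ LinearMap.ker (ℓV V hV) := by rw [hℓV V hV]; exact hmem
        rw [LinearMap.mem_ker] at this
        rw [map_add, map_smul] at this
        simpa [smul_eq_mul] using this
  obtain ⟨μ, hμf, hμW⟩ := avoid ws' subset_rfl
  -- choose δ such that the ball avoids all other walls
  set K : Set F := ⋃ W ∈ ws', (↑W : Set F) with hK
  have hKclosed : IsClosed K :=
    (ws'.finite_toSet).isClosed_biUnion fun W _ => Submodule.closed_of_finiteDimensional W
  have hμK : μ ∉ K := by
    intro h
    rw [hK] at h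
    obtain ⟨W, hW, hmem⟩ := Set.mem_iUnion₂.mp h
    exact hμW W hW hmem
  obtain ⟨δ, hδ0, hδ⟩ :=
    Metric.isOpen_iff.mp hKclosed.isOpen_compl μ hμK
  -- the core local structure argument
  have hμH : ξ μ = 0 := by
    have : μ ∈ H := hsubH hμf
    rw [← hξker] at this
    exact this
  have core : ∀ ζ : F →ₗ[ℝ] ℝ, LinearMap.ker ζ = H → ∀ τ : Set F, IsTope Φ τ →
      (∀ y ∈ τ, 0 < ζ y) → μ ∈ closure τ → ∀ z : F, dist z μ < δ → 0 < ζ z → z ∈ τ := by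
    intro ζ hζker τ ht hζτ hμτ z hzδ hζz
    obtain ⟨μτ, hμτreg, hτeq⟩ := ht
    obtain ⟨y, hyτ, hyδ⟩ := Metric.mem_closure_iff.mp hμτ δ hδ0
    rw [dist_comm] at hyδ
    have hyball : y ∈ Metric.ball μ δ := by rwa [Metric.mem_ball]
    have hzball : z ∈ Metric.ball μ δ := by rwa [Metric.mem_ball]
    have hseg : segment ℝ y z ⊆ Metric.ball μ δ :=
      (convex_ball μ δ).segment_subset hyball hzball
    have hsegpos : ∀ w ∈ segment ℝ y z, 0 < ζ w := by
      rintro w ⟨a, b, ha, hb, hab, rfl⟩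
      have h1 : ζ (a • y + b • z) = a * ζ y + b * ζ z := by
        rw [map_add, map_smul, map_smul]; rfl
      rw [h1]
      have hζy := hζτ y hyτ
      rcases eq_or_lt_of_le ha with ha' | ha'
      · have : b = 1 := by linarith
        rw [← ha', this]; simpa using hζz
      · nlinarith
    have hsegreg : segment ℝ y z ⊆ {x | IsRegular Φ x} := by
      intro w hw
      intro W hWwall
      by_cases hWH : W = H
      · subst hWH
        rw [← hζker]
        intro hmem
        rw [LinearMap.mem_ker] at hmem
        exact absurd hmem (ne_of_gt (hsegpos w hw))
      · intro hmem
        apply hδ (hseg hw)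
        rw [hK]
        refine Set.mem_iUnion₂.mpr ⟨W, ?_, hmem⟩
        rw [hws', Finset.mem_erase]
        exact ⟨hWH, (walls_finite Φ).mem_toFinset.mpr hWwall⟩
    have hycomp : τ = connectedComponentIn {x | IsRegular Φ x} y := by
      rw [hτeq]
      exact connectedComponentIn_eq (hτeq ▸ hyτ)
    rw [hycomp]
    exact (convex_segment y z).isPreconnected.subset_connectedComponentIn
      (left_mem_segment ℝ y z) hsegreg (right_mem_segment ℝ y z)
  -- sign of ξ on τ₂ : negative
  have hξτ₂ : ∀ y ∈ τ₂, ξ y < 0 := by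
    have hτ₂ξne : ∀ x ∈ τ₂, ξ x ≠ 0 := by
      intro x hx h
      exact (hreg2 hx) H hwall (by rw [← hξker]; exact h)
    rcases sign_const hconn2 hτ₂ξne with h | h
    · exfalso
      obtain ⟨z, hzτ₂, hzδ⟩ := Metric.mem_closure_iff.mp hμf.2 δ hδ0
      rw [dist_comm] at hzδ
      have hz1 : z ∈ τ₁ := core ξ hξker τ₁ ht1 hξτ₁ hμf.1 z hzδ (h z hzτ₂)
      -- τ₁ and τ₂ intersect, contradiction
      obtain ⟨μ₁, hμ₁reg, hτ₁eq⟩ := ht1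
      obtain ⟨μ₂, hμ₂reg, hτ₂eq⟩ := ht2
      apply hne12
      have hz1' : z ∈ connectedComponentIn {x | IsRegular Φ x} μ₁ := by
        rw [← hτ₁eq]; exact hz1
      have hz2' : z ∈ connectedComponentIn {x | IsRegular Φ x} μ₂ := by
        rw [← hτ₂eq]; exact hzτ₂
      rw [hτ₁eq, hτ₂eq, connectedComponentIn_eq hz1', connectedComponentIn_eq hz2']
    · exact h
  refine ⟨ξ, μ, δ, hδ0, hξker, hξτ₁, hξτ₂, hμf.1, hμf.2, hμH, ?_⟩
  intro z hzδ
  constructor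
  · exact fun h => core ξ hξker τ₁ ht1 hξτ₁ hμf.1 z hzδ h
  · intro h
    have hker' : LinearMap.ker (-ξ) = H := by
      rw [← hξker]; ext v; simp
    exact core (-ξ) hker' τ₂ ht2 (fun y hy => by simpa using hξτ₂ y hy) hμf.2 z hzδ
      (by simpa using h)

end Aux4
section Aux5
set_option linter.unusedSectionVars false
set_option maxHeartbeats 2000000

variable {F : Type*} [NormedAddCommGroup F] [NormedSpace ℝ F] [FiniteDimensional ℝ F]

/-- The key per-subset counting identity. -/
lemma key_count {N : ℕ} (Φ : Fin N → F)
    (hgen : Submodule.span ℝ (Set.range Φ) = ⊤)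
    (τ₁ τ₂ : Set F) (H : Submodule ℝ F) (hadj : Adjacent Φ τ₁ τ₂ H)
    (A : Finset (Fin N)) (hA : ∀ i, i ∈ A ↔ InOpenSideOf H τ₁ (Φ i))
    (J : Finset (Fin N)) :
    ((if J ∈ Gens Φ τ₁ then (1 : ℤ) else 0) - (if J ∈ Gens Φ τ₂ then (1 : ℤ) else 0))
      + ∑ S ∈ (J ∩ A).powerset,
          (-1 : ℤ) ^ S.card * (if (J \ A) ∪ S ∈ Gens (flipSeq Φ A) τ₂ then 1 else 0) = 0 := by
  classical
  obtain ⟨ξ, μ, δ, hδ0, hξker, hξτ₁, hξτ₂, hμc1, hμc2, hξμ0, hLS⟩ := adjacent_structure hadj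
  obtain ⟨ht1, ht2, hne12, hwall, hsubH, hspanH⟩ := hadj
  obtain ⟨hreg1, hopen1, hne1, hconn1, hconv1, hcone1⟩ := tope_facts ht1
  obtain ⟨hreg2, hopen2, hne2, hconn2, hconv2, hcone2⟩ := tope_facts ht2
  obtain ⟨y₁, hy₁⟩ := hne1
  obtain ⟨y₂, hy₂⟩ := hne2
  -- characterization of A via ξ
  have hAχ : ∀ i, i ∈ A ↔ 0 < ξ (Φ i) := by
    intro i
    rw [hA i]
    constructor
    · rintro ⟨ξ', h1, h2, h3⟩
      have hξy₁ : 0 < ξ y₁ := hξτ₁ y₁ hy₁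
      set c : ℝ := ξ' y₁ / ξ y₁ with hc
      have hcpos : 0 < c := div_pos (h2 y₁ hy₁) hξy₁
      have hprop : ∀ v, ξ' v = c * ξ v := by
        set η : F →ₗ[ℝ] ℝ := ξ' - c • ξ with hη
        have hηH : ∀ v ∈ H, η v = 0 := by
          intro v hv
          have e1 : ξ v = 0 := by
            have : v ∈ LinearMap.ker ξ := by rw [hξker]; exact hv
            exact this
          simp [hη, h1 v hv, e1]
        have hηy₁ : η y₁ = 0 := by
          simp only [hη, LinearMap.sub_apply, LinearMap.smul_apply, smul_eq_mul, hc]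
          field_simp; ring
        have hy₁H : y₁ ∉ H := by
          rw [← hξker]
          intro hmem
          rw [LinearMap.mem_ker] at hmem
          exact absurd hmem (ne_of_gt hξy₁)
        have hsup : H ⊔ Submodule.span ℝ {y₁} = ⊤ := by
          set H' := H ⊔ Submodule.span ℝ {y₁} with hH'
          have hlt : H < H' := by
            refine lt_of_le_of_ne le_sup_left fun h => ?_
            have : y₁ ∈ H' := Submodule.mem_sup_right (Submodule.mem_span_singleton_self y₁)
            rw [← h] at this
            exact hy₁H this
          have h1' : Module.finrank ℝ H < Module.finrank ℝ H' :=
            Submodule.finrank_lt_finrank_of_lt hlt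
          have h2' := wall_finrank hwall
          have h3' : Module.finrank ℝ H' ≤ Module.finrank ℝ F := Submodule.finrank_le H'
          exact Submodule.eq_top_of_finrank_eq (by omega)
        have hker : LinearMap.ker η = ⊤ := by
          rw [eq_top_iff, ← hsup]
          refine sup_le (fun v hv => hηH v hv) ?_
          rw [Submodule.span_le, Set.singleton_subset_iff]
          exact hηy₁
        intro v
        have : η v = 0 := by
          have : v ∈ LinearMap.ker η := by rw [hker]; trivial
          exact this
        simp only [hη, LinearMap.sub_apply, LinearMap.smul_apply, smul_eq_mul] at this
        linarith
      have h4 := h3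
      rw [hprop (Φ i)] at h4
      nlinarith [h4, hcpos]
    · intro h
      refine ⟨ξ, fun v hv => ?_, hξτ₁, h⟩
      have : v ∈ LinearMap.ker ξ := by rw [hξker]; exact hv
      exact this
  have hΨpm : ∀ i, flipSeq Φ A i = Φ i ∨ flipSeq Φ A i = -Φ i := by
    intro i
    by_cases h : i ∈ A <;> simp [flipSeq, h]
  have hpm_id : ∀ i, Φ i = Φ i ∨ Φ i = -Φ i := fun i => Or.inl rfl
  have hξA : ∀ i ∈ A, 0 < ξ (Φ i) := fun i hi => (hAχ i).mp hi
  have hξnA : ∀ i, i ∉ A → ξ (Φ i) ≤ 0 := fun i hi =>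
    le_of_not_gt fun h => hi ((hAχ i).mpr h)
  have hflip_nA : ∀ i, i ∉ A → flipSeq Φ A i = Φ i := fun i hi => by simp [flipSeq, hi]
  have hflip_A : ∀ i ∈ A, flipSeq Φ A i = -Φ i := fun i hi => by simp [flipSeq, hi]
  have hrep : ∀ (Ψ : Fin N → F) (s : Set (Fin N)) (v : F), v ∈ coneOf Ψ s →
      ∃ c : Fin N → ℝ, (∀ i, 0 ≤ c i) ∧ (∀ i, i ∉ s → c i = 0) ∧ (v = ∑ i, c i • Ψ i) ∧
        ξ v = ∑ i, c i * ξ (Ψ i) := by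
    rintro Ψ s v ⟨c, h1, h2, h3⟩
    refine ⟨c, h1, h2, h3, ?_⟩
    rw [h3, map_sum]
    exact Finset.sum_congr rfl fun i _ => by rw [map_smul, smul_eq_mul]
  have hpoint : ∀ v : F, ∃ t : ℝ, 0 < t ∧ dist (μ + t • v) μ < δ := by
    intro v
    refine ⟨δ / (2 * (‖v‖ + 1)), by positivity, ?_⟩
    have h1 : dist (μ + (δ / (2 * (‖v‖ + 1))) • v) μ = (δ / (2 * (‖v‖ + 1))) * ‖v‖ := by
      rw [dist_eq_norm, add_sub_cancel_left, norm_smul, Real.norm_eq_abs,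
        abs_of_pos (by positivity)]
    rw [h1, div_mul_eq_mul_div, div_lt_iff₀ (by positivity)]
    nlinarith [norm_nonneg v, hδ0]
  -- main case analysis
  by_cases hJspan : Submodule.span ℝ (Φ '' (↑J : Set (Fin N))) = ⊤
  swap
  · -- J does not span : all indicators vanish
    rw [if_neg (fun h : J ∈ Gens Φ τ₁ => hJspan h.1),
      if_neg (fun h : J ∈ Gens Φ τ₂ => hJspan h.1)]
    rw [Finset.sum_eq_zero]
    · ring
    · intro S hS
      rw [Finset.mem_powerset] at hS
      have hsub : ((J \ A) ∪ S : Finset (Fin N)) ⊆ J :=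
        Finset.union_subset (Finset.sdiff_subset)
          (hS.trans (Finset.inter_subset_left))
      rw [if_neg, mul_zero]
      intro hmem
      apply hJspan
      rw [← top_le_iff]
      have e1 : Submodule.span ℝ (flipSeq Φ A '' (↑((J \ A) ∪ S) : Set (Fin N))) = ⊤ := hmem.1
      rw [span_pm hΨpm] at e1
      rw [← e1]
      exact Submodule.span_mono (Set.image_mono (by exact_mod_cast hsub))
  -- J spans
  by_cases hJA : J ∩ A = ∅
  · -- no element of J on the positive side
    have ha0 : J ∉ Gens Φ τ₁ := by
      rintro ⟨-, hsub⟩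
      obtain ⟨c, hc0, hcs, hcv, hξv⟩ := hrep Φ (↑J) y₁ (hsub hy₁)
      have : ξ y₁ ≤ 0 := by
        rw [hξv]
        refine Finset.sum_nonpos fun i _ => ?_
        by_cases hiJ : i ∈ J
        · have hiA : i ∉ A := by
            intro hiA
            have : i ∈ J ∩ A := Finset.mem_inter.mpr ⟨hiJ, hiA⟩
            rw [hJA] at this
            exact absurd this (Finset.notMem_empty i)
          exact mul_nonpos_of_nonneg_of_nonpos (hc0 i) (hξnA i hiA)
        · rw [hcs i (by simpa using hiJ), zero_mul]
      exact absurd (hξτ₁ y₁ hy₁) (not_lt.mpr this)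
    have hJAd : J \ A = J := by
      rw [Finset.sdiff_eq_self_iff_disjoint, Finset.disjoint_iff_inter_eq_empty]
      exact hJA
    have hGeq : ((J \ A) ∪ (∅ : Finset (Fin N)) ∈ Gens (flipSeq Φ A) τ₂) ↔ J ∈ Gens Φ τ₂ := by
      rw [Finset.union_empty, hJAd]
      have hcongr : coneOf (flipSeq Φ A) (↑J : Set (Fin N)) = coneOf Φ (↑J : Set (Fin N)) := by
        refine coneOf_congr fun i hi => ?_
        have hiA : i ∉ A := by
          intro hiA
          have : i ∈ J ∩ A := Finset.mem_inter.mpr ⟨by exact_mod_cast hi, hiA⟩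
          rw [hJA] at this
          exact absurd this (Finset.notMem_empty i)
        exact hflip_nA i hiA
      constructor
      · rintro ⟨h1, h2⟩
        refine ⟨by rwa [span_pm hΨpm] at h1, by rwa [hcongr] at h2⟩
      · rintro ⟨h1, h2⟩
        refine ⟨by rwa [span_pm hΨpm], by rwa [hcongr]⟩
    rw [hJA, Finset.powerset_empty, Finset.sum_singleton]
    rw [if_neg ha0]
    by_cases hb : J ∈ Gens Φ τ₂
    · rw [if_pos hb, if_pos (hGeq.mpr hb)]
      simp
    · rw [if_neg hb, if_neg (fun h => hb (hGeq.mp h))]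
      simp
  · -- J ∩ A nonempty
    obtain ⟨a₀, ha₀⟩ := Finset.nonempty_iff_ne_empty.mpr hJA
    have ha₀J : a₀ ∈ J := (Finset.mem_inter.mp ha₀).1
    have ha₀A : a₀ ∈ A := (Finset.mem_inter.mp ha₀).2
    -- common sub-argument : if (J\A) ∪ S ∈ Gens flip τ₂ then μ ∈ coneOf Φ (J\A)
    have hμ_core : ∀ S : Finset (Fin N), S ⊆ J ∩ A →
        ((J \ A) ∪ S ∈ Gens (flipSeq Φ A) τ₂) → μ ∈ coneOf Φ (↑(J \ A) : Set (Fin N)) := by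
      intro S hS hmem
      have hclos : closure τ₂ ⊆ coneOf (flipSeq Φ A) (↑((J \ A) ∪ S) : Set (Fin N)) :=
        closure_minimal hmem.2 (isClosed_coneOf _ _)
      obtain ⟨c, hc0, hcs, hcv, hξv⟩ := hrep _ _ μ (hclos hμc2)
      have hterms : ∀ i, c i * ξ (flipSeq Φ A i) ≤ 0 := by
        intro i
        by_cases hiU : i ∈ (J \ A) ∪ S
        · rcases Finset.mem_union.mp hiU with hiJA | hiS
          · have hiA : i ∉ A := (Finset.mem_sdiff.mp hiJA).2
            rw [hflip_nA i hiA]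
            exact mul_nonpos_of_nonneg_of_nonpos (hc0 i) (hξnA i hiA)
          · have hiA : i ∈ A := (Finset.mem_inter.mp (hS hiS)).2
            rw [hflip_A i hiA, map_neg]
            have := hξA i hiA
            nlinarith [hc0 i]
        · rw [hcs i (by simpa using hiU), zero_mul]
      have hzero : ∀ i, c i * ξ (flipSeq Φ A i) = 0 := by
        have hsum0 : ∑ i, -(c i * ξ (flipSeq Φ A i)) = 0 := by
          rw [Finset.sum_neg_distrib, ← hξv, hξμ0, neg_zero]
        intro i
        have := (Finset.sum_eq_zero_iff_of_nonneg
          (fun i _ => by simpa using neg_nonneg.mpr (hterms i))).mp hsum0 i (Finset.mem_univ i)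
        simpa using this
      have hcS : ∀ i ∈ S, c i = 0 := by
        intro i hiS
        have hiA : i ∈ A := (Finset.mem_inter.mp (hS hiS)).2
        have h1 := hzero i
        rw [hflip_A i hiA, map_neg] at h1
        have h2 := hξA i hiA
        rcases mul_eq_zero.mp h1 with h | h
        · exact h
        · exfalso; rw [neg_eq_zero] at h; exact absurd h (ne_of_gt h2)
      have hμflip : μ ∈ coneOf (flipSeq Φ A) (↑(J \ A) : Set (Fin N)) := by
        refine ⟨c, hc0, ?_, hcv⟩
        intro i hi
        by_cases hiS : i ∈ S
        · exact hcS i hiS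
        · refine hcs i ?_
          simp only [Finset.coe_union, Set.mem_union]
          push_neg
          exact ⟨by simpa using hi, by simpa using hiS⟩
      rwa [coneOf_congr (fun i hi => hflip_nA i (Finset.mem_sdiff.mp (by simpa using hi)).2)]
        at hμflip
    by_cases hb : τ₂ ⊆ coneOf Φ (↑J : Set (Fin N))
    · -- τ₂ inside the cone of J
      have hbmem : J ∈ Gens Φ τ₂ := ⟨hJspan, hb⟩
      -- then also τ₁ is inside
      have hamem : J ∈ Gens Φ τ₁ := by
        have hμC : μ ∈ coneOf Φ (↑J : Set (Fin N)) :=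
          closure_minimal hb (isClosed_coneOf _ _) hμc2
        obtain ⟨t, ht0, htδ⟩ := hpoint (Φ a₀)
        have hξν : 0 < ξ (μ + t • Φ a₀) := by
          rw [map_add, map_smul, smul_eq_mul, hξμ0, zero_add]
          exact mul_pos ht0 (hξA a₀ ha₀A)
        have hντ₁ : μ + t • Φ a₀ ∈ τ₁ := (hLS _ htδ).1 hξν
        have hνC : μ + t • Φ a₀ ∈ coneOf Φ (↑J : Set (Fin N)) :=
          add_smul_mem_coneOf hμC (by simpa using ha₀J) ht0.le
        exact ⟨hJspan, (tope_subset_coneOf hgen hpm_id ht1 hντ₁ hνC).1⟩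
      rw [if_pos hamem, if_pos hbmem]
      have hsum0 : ∑ S ∈ (J ∩ A).powerset,
          (-1 : ℤ) ^ S.card * (if (J \ A) ∪ S ∈ Gens (flipSeq Φ A) τ₂ then 1 else 0) = 0 := by
        by_cases hg0 : τ₂ ⊆ coneOf (flipSeq Φ A) (↑(J \ A) : Set (Fin N))
        · -- all indicators are 1
          have hspan0 : Submodule.span ℝ (Φ '' (↑(J \ A) : Set (Fin N))) = ⊤ :=
            (tope_subset_coneOf hgen hΨpm ht2 hy₂ (hg0 hy₂)).2
          have hall : ∀ S ∈ (J ∩ A).powerset, (J \ A) ∪ S ∈ Gens (flipSeq Φ A) τ₂ := by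
            intro S hS
            constructor
            · rw [span_pm hΨpm, ← top_le_iff, ← hspan0]
              exact Submodule.span_mono (Set.image_mono (by
                exact_mod_cast (Finset.subset_union_left : J \ A ⊆ (J \ A) ∪ S)))
            · exact hg0.trans (coneOf_mono (by
                exact_mod_cast (Finset.subset_union_left : J \ A ⊆ (J \ A) ∪ S)))
          calc ∑ S ∈ (J ∩ A).powerset,
              (-1 : ℤ) ^ S.card * (if (J \ A) ∪ S ∈ Gens (flipSeq Φ A) τ₂ then 1 else 0)
              = ∑ S ∈ (J ∩ A).powerset, (-1 : ℤ) ^ S.card := by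
                refine Finset.sum_congr rfl fun S hS => ?_
                rw [if_pos (hall S hS), mul_one]
            _ = 0 := by
                rw [Finset.sum_powerset_neg_one_pow_card, if_neg hJA]
        · -- all indicators are 0
          refine Finset.sum_eq_zero fun S hS => ?_
          rw [Finset.mem_powerset] at hS
          rw [if_neg, mul_zero]
          intro hmem
          apply hg0
          have hμ0 : μ ∈ coneOf Φ (↑(J \ A) : Set (Fin N)) := hμ_core S hS hmem
          -- find j' ∈ J \ A with ξ (Φ j') < 0
          obtain ⟨c, hc0, hcs, hcv, hξv⟩ := hrep Φ (↑J) y₂ (hb hy₂)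
          have hy₂neg : ξ y₂ < 0 := hξτ₂ y₂ hy₂
          have hex : ∃ i, c i * ξ (Φ i) < 0 := by
            by_contra hc'
            push_neg at hc'
            have : 0 ≤ ξ y₂ := by
              rw [hξv]
              exact Finset.sum_nonneg fun i _ => hc' i
            linarith
          obtain ⟨j', hj'⟩ := hex
          have hξj' : ξ (Φ j') < 0 := by
            rcases lt_or_ge (ξ (Φ j')) 0 with h | h
            · exact h
            · exfalso; nlinarith [hc0 j', hj']
          have hj'J : j' ∈ J := by
            by_contra h
            rw [hcs j' (by simpa using h), zero_mul] at hj'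
            exact absurd hj' (lt_irrefl 0)
          have hj'A : j' ∉ A := fun h => absurd (hξA j' h) (not_lt.mpr hξj'.le)
          obtain ⟨t, ht0, htδ⟩ := hpoint (Φ j')
          have hξν : ξ (μ + t • Φ j') < 0 := by
            rw [map_add, map_smul, smul_eq_mul, hξμ0, zero_add]
            exact mul_neg_of_pos_of_neg ht0 hξj'
          have hντ₂ : μ + t • Φ j' ∈ τ₂ := (hLS _ htδ).2 hξν
          have hνC : μ + t • Φ j' ∈ coneOf Φ (↑(J \ A) : Set (Fin N)) :=
            add_smul_mem_coneOf hμ0 (by simpa using Finset.mem_sdiff.mpr ⟨hj'J, hj'A⟩) ht0.le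
          have := (tope_subset_coneOf hgen hpm_id ht2 hντ₂ hνC).1
          rwa [coneOf_congr
            (fun i hi => (hflip_nA i (Finset.mem_sdiff.mp (by simpa using hi)).2).symm)] at this
      rw [hsum0]
      ring
    · -- τ₂ not inside the cone of J
      have hbneg : J ∉ Gens Φ τ₂ := fun h => hb h.2
      rw [if_neg hbneg]
      by_cases ha : τ₁ ⊆ coneOf Φ (↑J : Set (Fin N))
      · -- the wall-crossing case : a = 1, b = 0
        have hamem : J ∈ Gens Φ τ₁ := ⟨hJspan, ha⟩
        rw [if_pos hamem]
        -- all generators of J pair nonnegatively with ξ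
        have hJpos : ∀ j ∈ J, 0 ≤ ξ (Φ j) := by
          intro j hjJ
          by_contra hneg
          push_neg at hneg
          have hμC : μ ∈ coneOf Φ (↑J : Set (Fin N)) :=
            closure_minimal ha (isClosed_coneOf _ _) hμc1
          obtain ⟨t, ht0, htδ⟩ := hpoint (Φ j)
          have hξν : ξ (μ + t • Φ j) < 0 := by
            rw [map_add, map_smul, smul_eq_mul, hξμ0, zero_add]
            exact mul_neg_of_pos_of_neg ht0 hneg
          have hντ₂ : μ + t • Φ j ∈ τ₂ := (hLS _ htδ).2 hξν
          have hνC : μ + t • Φ j ∈ coneOf Φ (↑J : Set (Fin N)) :=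
            add_smul_mem_coneOf hμC (by simpa using hjJ) ht0.le
          exact hb (tope_subset_coneOf hgen hpm_id ht2 hντ₂ hνC).1
        -- μ lies in the cone of J \ A
        have hμ0 : μ ∈ coneOf Φ (↑(J \ A) : Set (Fin N)) := by
          have hμC : μ ∈ coneOf Φ (↑J : Set (Fin N)) :=
            closure_minimal ha (isClosed_coneOf _ _) hμc1
          obtain ⟨c, hc0, hcs, hcv, hξv⟩ := hrep Φ (↑J) μ hμC
          have hterms : ∀ i, 0 ≤ c i * ξ (Φ i) := by
            intro i
            by_cases hiJ : i ∈ J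
            · exact mul_nonneg (hc0 i) (hJpos i hiJ)
            · rw [hcs i (by simpa using hiJ), zero_mul]
          have hzero : ∀ i, c i * ξ (Φ i) = 0 := by
            intro i
            exact (Finset.sum_eq_zero_iff_of_nonneg (fun i _ => hterms i)).mp
              (by rw [← hξv, hξμ0]) i (Finset.mem_univ i)
          refine ⟨c, hc0, ?_, hcv⟩
          intro i hi
          by_cases hiJ : i ∈ J
          · have hiA : i ∈ A := by
              by_contra h
              exact (by simpa using hi : i ∉ J \ A) (Finset.mem_sdiff.mpr ⟨hiJ, h⟩)
            rcases mul_eq_zero.mp (hzero i) with h | h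
            · exact h
            · exact absurd h (ne_of_gt (hξA i hiA))
          · exact hcs i (by simpa using hiJ)
        -- every nonempty S gives a member of Gens
        have hall : ∀ S ∈ (J ∩ A).powerset, S ≠ ∅ →
            (J \ A) ∪ S ∈ Gens (flipSeq Φ A) τ₂ := by
          intro S hS hSne
          rw [Finset.mem_powerset] at hS
          obtain ⟨a, haS⟩ := Finset.nonempty_iff_ne_empty.mpr hSne
          have haA : a ∈ A := (Finset.mem_inter.mp (hS haS)).2
          obtain ⟨t, ht0, htδ⟩ := hpoint (flipSeq Φ A a)
          have hξflip : ξ (flipSeq Φ A a) < 0 := by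
            rw [hflip_A a haA, map_neg]
            simpa using hξA a haA
          have hξν : ξ (μ + t • flipSeq Φ A a) < 0 := by
            rw [map_add, map_smul, smul_eq_mul, hξμ0, zero_add]
            exact mul_neg_of_pos_of_neg ht0 hξflip
          have hντ₂ : μ + t • flipSeq Φ A a ∈ τ₂ := (hLS _ htδ).2 hξν
          have hμflip : μ ∈ coneOf (flipSeq Φ A) (↑((J \ A) ∪ S) : Set (Fin N)) := by
            have h1 : μ ∈ coneOf (flipSeq Φ A) (↑(J \ A) : Set (Fin N)) := by
              rwa [coneOf_congr
                (fun i hi => (hflip_nA i (Finset.mem_sdiff.mp (by simpa using hi)).2).symm)]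
                at hμ0
            exact coneOf_mono (by
              exact_mod_cast (Finset.subset_union_left : J \ A ⊆ (J \ A) ∪ S)) h1
          have hνC : μ + t • flipSeq Φ A a ∈ coneOf (flipSeq Φ A) (↑((J \ A) ∪ S) : Set (Fin N)) :=
            add_smul_mem_coneOf hμflip
              (by simpa using (Finset.mem_union_right _ haS : a ∈ (J \ A) ∪ S)) ht0.le
          obtain ⟨hsub, hspan⟩ := tope_subset_coneOf hgen hΨpm ht2 hντ₂ hνC
          exact ⟨by rw [span_pm hΨpm]; exact hspan, hsub⟩
        have hempty : (J \ A) ∪ (∅ : Finset (Fin N)) ∉ Gens (flipSeq Φ A) τ₂ := by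
          rw [Finset.union_empty]
          rintro ⟨-, hsub⟩
          have h1 := hsub hy₂
          rw [coneOf_congr
            (fun i hi => (hflip_nA i (Finset.mem_sdiff.mp (by simpa using hi)).2))] at h1
          obtain ⟨c, hc0, hcs, hcv, hξv⟩ := hrep Φ _ y₂ h1
          have hy₂0 : ξ y₂ = 0 := by
            rw [hξv]
            refine Finset.sum_eq_zero fun i _ => ?_
            by_cases hiJA : i ∈ J \ A
            · obtain ⟨hiJ, hiA⟩ := Finset.mem_sdiff.mp hiJA
              have h2 : ξ (Φ i) = 0 := le_antisymm (hξnA i hiA) (hJpos i hiJ)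
              rw [h2, mul_zero]
            · rw [hcs i (by simpa using hiJA), zero_mul]
          exact absurd (hξτ₂ y₂ hy₂) (by rw [hy₂0]; exact lt_irrefl 0)
        -- compute the sum : -1
        have hsum : ∑ S ∈ (J ∩ A).powerset,
            (-1 : ℤ) ^ S.card * (if (J \ A) ∪ S ∈ Gens (flipSeq Φ A) τ₂ then 1 else 0)
            = -1 := by
          have step : ∀ S ∈ (J ∩ A).powerset,
              (-1 : ℤ) ^ S.card * (if (J \ A) ∪ S ∈ Gens (flipSeq Φ A) τ₂ then 1 else 0)
              = (-1 : ℤ) ^ S.card - (if S = ∅ then 1 else 0) := by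
            intro S hS
            by_cases hSe : S = ∅
            · subst hSe
              rw [if_neg hempty, if_pos rfl, mul_zero]
              simp
            · rw [if_pos (hall S hS hSe), if_neg hSe, mul_one, sub_zero]
          rw [Finset.sum_congr rfl step, Finset.sum_sub_distrib]
          rw [Finset.sum_powerset_neg_one_pow_card, if_neg hJA]
          have : ∑ S ∈ (J ∩ A).powerset, (if S = ∅ then (1 : ℤ) else 0) = 1 := by
            rw [Finset.sum_ite_eq' (J ∩ A).powerset (∅ : Finset (Fin N)) (fun _ => (1 : ℤ))]
            rw [if_pos (Finset.empty_mem_powerset _)]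
          rw [this]
          ring
        rw [hsum]
        ring
      · -- neither tope inside : all indicators vanish
        have haneg : J ∉ Gens Φ τ₁ := fun h => ha h.2
        rw [if_neg haneg]
        have hsum : ∑ S ∈ (J ∩ A).powerset,
            (-1 : ℤ) ^ S.card * (if (J \ A) ∪ S ∈ Gens (flipSeq Φ A) τ₂ then 1 else 0) = 0 := by
          refine Finset.sum_eq_zero fun S hS => ?_
          rw [Finset.mem_powerset] at hS
          rw [if_neg, mul_zero]
          intro hmem
          apply ha
          have hμ0 : μ ∈ coneOf Φ (↑(J \ A) : Set (Fin N)) := hμ_core S hS hmem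
          have hμC : μ ∈ coneOf Φ (↑J : Set (Fin N)) :=
            coneOf_mono (by exact_mod_cast (Finset.sdiff_subset : J \ A ⊆ J)) hμ0
          obtain ⟨t, ht0, htδ⟩ := hpoint (Φ a₀)
          have hξν : 0 < ξ (μ + t • Φ a₀) := by
            rw [map_add, map_smul, smul_eq_mul, hξμ0, zero_add]
            exact mul_pos ht0 (hξA a₀ ha₀A)
          have hντ₁ : μ + t • Φ a₀ ∈ τ₁ := (hLS _ htδ).1 hξν
          have hνC : μ + t • Φ a₀ ∈ coneOf Φ (↑J : Set (Fin N)) :=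
            add_smul_mem_coneOf hμC (by simpa using ha₀J) ht0.le
          exact (tope_subset_coneOf hgen hpm_id ht1 hντ₁ hνC).1
        rw [hsum]
        ring

end Aux5
section Aux6
set_option linter.unusedSectionVars false
set_option maxHeartbeats 4000000

variable {F : Type*} [NormedAddCommGroup F] [NormedSpace ℝ F] [FiniteDimensional ℝ F]

lemma neg_one_pow_parity {R : Type*} [CommRing R] (a b : ℕ) (h : a % 2 = b % 2) :
    (-1 : R) ^ a = (-1) ^ b := by
  rw [show a = 2 * (a / 2) + a % 2 by omega, show b = 2 * (b / 2) + b % 2 by omega]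
  rw [pow_add, pow_add, pow_mul, pow_mul]
  simp [h]

lemma neg_one_pow_sub_eq {R : Type*} [CommRing R] {r n : ℕ} (h : r ≤ n) :
    (-1 : R) ^ (n - r) = (-1) ^ (n + r) := by
  refine neg_one_pow_parity _ _ ?_
  omega

lemma finset_id1 {N : ℕ} (A J S : Finset (Fin N)) (hS : S ⊆ J ∩ A) :
    ((J \ A) ∪ S) ∪ ((J ∩ A) \ S) = J := by
  ext x
  have := @hS x
  simp only [Finset.mem_union, Finset.mem_sdiff, Finset.mem_inter] at *
  tauto

lemma finset_id2 {N : ℕ} (A J S : Finset (Fin N)) (hS : S ⊆ J ∩ A) :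
    ((J \ A) ∪ S) ∩ A = S := by
  ext x
  have := @hS x
  simp only [Finset.mem_union, Finset.mem_sdiff, Finset.mem_inter] at *
  tauto

lemma finset_id3 {N : ℕ} (A J S : Finset (Fin N)) (hS : S ⊆ J ∩ A) :
    ((((J \ A) ∪ S)ᶜ : Finset (Fin N)) ∩ A) \ ((J ∩ A) \ S) = A \ J := by
  ext x
  have := @hS x
  simp only [Finset.mem_union, Finset.mem_sdiff, Finset.mem_inter, Finset.mem_compl] at *
  tauto

lemma finset_id4 {N : ℕ} (A J S : Finset (Fin N)) (hS : S ⊆ J ∩ A) :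
    ((J \ A) ∪ S).card = (J \ A).card + S.card := by
  rw [Finset.card_union_of_disjoint]
  rw [Finset.disjoint_left]
  intro x hx hxS
  exact (Finset.mem_sdiff.mp hx).2 (Finset.mem_inter.mp (hS hxS)).2

lemma finset_id5 {N : ℕ} (A J S : Finset (Fin N)) (hS : S ⊆ J ∩ A) :
    (J ∩ A) \ S ⊆ (((J \ A) ∪ S)ᶜ : Finset (Fin N)) ∩ A := by
  intro x hx
  have := @hS x
  simp only [Finset.mem_union, Finset.mem_sdiff, Finset.mem_inter, Finset.mem_compl] at *
  tauto

lemma finset_id6 {N : ℕ} (A I K : Finset (Fin N)) (hK : K ⊆ Iᶜ ∩ A) :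
    ((I ∪ K) \ A) ∪ (I ∩ A) = I := by
  ext x
  have := @hK x
  simp only [Finset.mem_union, Finset.mem_sdiff, Finset.mem_inter, Finset.mem_compl] at *
  tauto

lemma finset_id7 {N : ℕ} (A I K : Finset (Fin N)) (hK : K ⊆ Iᶜ ∩ A) :
    ((I ∪ K) ∩ A) \ (I ∩ A) = K := by
  ext x
  have := @hK x
  simp only [Finset.mem_union, Finset.mem_sdiff, Finset.mem_inter, Finset.mem_compl] at *
  tauto

lemma finset_id8 {N : ℕ} (A I K : Finset (Fin N)) (hK : K ⊆ Iᶜ ∩ A) :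
    I ∩ A ⊆ (I ∪ K) ∩ A := by
  intro x hx
  simp only [Finset.mem_union, Finset.mem_inter] at *
  tauto

lemma finset_id9 {N : ℕ} (A I K : Finset (Fin N)) (hK : K ⊆ Iᶜ ∩ A) :
    ((I ∪ K)ᶜ : Finset (Fin N)) = (Iᶜ \ A) ∪ ((Iᶜ ∩ A) \ K) := by
  ext x
  have := @hK x
  simp only [Finset.mem_union, Finset.mem_sdiff, Finset.mem_inter, Finset.mem_compl] at *
  tauto

lemma finset_id9disj {N : ℕ} (A I K : Finset (Fin N)) (hK : K ⊆ Iᶜ ∩ A) :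
    Disjoint ((Iᶜ : Finset (Fin N)) \ A) (((Iᶜ : Finset (Fin N)) ∩ A) \ K) := by
  rw [Finset.disjoint_left]
  intro x hx hx'
  simp only [Finset.mem_sdiff, Finset.mem_inter, Finset.mem_compl] at *
  tauto

lemma finset_idIK {N : ℕ} (A I K : Finset (Fin N)) (hK : K ⊆ Iᶜ ∩ A) :
    Disjoint I K := by
  rw [Finset.disjoint_left]
  intro x hx hx'
  have := hK hx'
  simp only [Finset.mem_inter, Finset.mem_compl] at this
  exact this.1 hx

/-- generic reindexing of the double sum -/
lemma reindex_sum {N : ℕ} (A : Finset (Fin N)) {R : Type*} [AddCommMonoid R]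
    (f : Finset (Fin N) → Finset (Fin N) → R) :
    ∑ I : Finset (Fin N), ∑ K ∈ ((Iᶜ : Finset (Fin N)) ∩ A).powerset, f I K
      = ∑ J : Finset (Fin N), ∑ S ∈ (J ∩ A).powerset, f ((J \ A) ∪ S) ((J ∩ A) \ S) := by
  classical
  rw [Finset.sum_sigma', Finset.sum_sigma']
  refine Finset.sum_nbij' (i := fun p => ⟨p.1 ∪ p.2, p.1 ∩ A⟩)
    (j := fun p => ⟨(p.1 \ A) ∪ p.2, (p.1 ∩ A) \ p.2⟩) ?_ ?_ ?_ ?_ ?_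
  · rintro ⟨I, K⟩ hp
    rw [Finset.mem_sigma] at hp ⊢
    refine ⟨Finset.mem_univ _, ?_⟩
    rw [Finset.mem_powerset]
    exact finset_id8 A I K (Finset.mem_powerset.mp hp.2)
  · rintro ⟨J, S⟩ hp
    rw [Finset.mem_sigma] at hp ⊢
    refine ⟨Finset.mem_univ _, ?_⟩
    rw [Finset.mem_powerset]
    exact finset_id5 A J S (Finset.mem_powerset.mp hp.2)
  · rintro ⟨I, K⟩ hp
    rw [Finset.mem_sigma, Finset.mem_powerset] at hp
    have h1 := finset_id6 A I K hp.2
    have h2 := finset_id7 A I K hp.2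
    simp only
    exact Sigma.ext h1 (heq_of_eq (by rw [h2]))
  · rintro ⟨J, S⟩ hp
    rw [Finset.mem_sigma, Finset.mem_powerset] at hp
    have h1 := finset_id1 A J S hp.2
    have h2 := finset_id2 A J S hp.2
    simp only
    exact Sigma.ext h1 (heq_of_eq (by rw [h2]))
  · rintro ⟨I, K⟩ hp
    rw [Finset.mem_sigma, Finset.mem_powerset] at hp
    have h1 := finset_id6 A I K hp.2
    have h2 := finset_id7 A I K hp.2
    simp only
    rw [h1, h2]

end Aux6
/-- Combinatorial wall-crossing formula:
`X(Φ,τ₁) = X(Φ,τ₂) - (-1)^{|A|} Flip_A X(Φ_flip^A, τ₂)`. -/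
theorem combinatorial_wall_crossing
    {F : Type*} [NormedAddCommGroup F] [NormedSpace ℝ F] [FiniteDimensional ℝ F]
    {N : ℕ} (Φ : Fin N → F)
    (hne : ∀ i, Φ i ≠ 0)
    (hgen : Submodule.span ℝ (Set.range Φ) = ⊤)
    (hsal : ∃ a : F →ₗ[ℝ] ℝ, ∀ i, 0 < a (Φ i))
    (τ₁ τ₂ : Set F) (H : Submodule ℝ F) (hadj : Adjacent Φ τ₁ τ₂ H)
    (hτ₁c : τ₁ ⊆ fullCone Φ)
    (A : Finset (Fin N)) (hA : ∀ i, i ∈ A ↔ InOpenSideOf H τ₁ (Φ i)) :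
    BGpoly Φ τ₁ =
      BGpoly Φ τ₂ -
        (-1 : MvPolynomial (Fin N ⊕ Fin N) ℤ) ^ A.card *
          FlipPoly A (BGpoly (flipSeq Φ A) τ₂) := by
  classical
  set R := MvPolynomial (Fin N ⊕ Fin N) ℤ with hR
  set r := Module.finrank ℝ F with hrdef
  set T : Finset (Fin N) → R := fun J =>
    (∏ j ∈ Jᶜ, X (Sum.inl j)) * ∏ i ∈ J, (X (Sum.inl i) + X (Sum.inr i)) with hT
  -- a member of Gens has at least r elements
  have hcard_of_gens : ∀ {Ψ : Fin N → F} {τ : Set F} {I : Finset (Fin N)},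
      I ∈ Gens Ψ τ → r ≤ I.card := by
    rintro Ψ τ I ⟨hspan, -⟩
    have h1 : Ψ '' (↑I : Set (Fin N)) = ↑(I.image Ψ) := (Finset.coe_image).symm
    rw [h1] at hspan
    have h2 : Module.finrank ℝ (Submodule.span ℝ (↑(I.image Ψ) : Set F)) ≤ (I.image Ψ).card :=
      finrank_span_finset_le_card (R := ℝ) (I.image Ψ)
    rw [hspan, finrank_top] at h2
    exact h2.trans Finset.card_image_le
  -- expansion of BGpoly with normalized signs
  have hBG : ∀ (Ψ : Fin N → F) (τ : Set F), BGpoly Ψ τ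
      = ∑ J : Finset (Fin N),
          (if J ∈ Gens Ψ τ then (-1 : R) ^ (J.card + r) * T J else 0) := by
    intro Ψ τ
    unfold BGpoly
    refine Finset.sum_congr rfl fun J _ => ?_
    by_cases h : J ∈ Gens Ψ τ
    · rw [if_pos h, if_pos h, ← hrdef, neg_one_pow_sub_eq (hcard_of_gens h)]
    · rw [if_neg h, if_neg h]
  -- expansion of the flipped, renamed polynomial
  have hflip : FlipPoly A (BGpoly (flipSeq Φ A) τ₂)
      = ∑ I : Finset (Fin N), ∑ K ∈ ((Iᶜ : Finset (Fin N)) ∩ A).powerset,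
          (if I ∈ Gens (flipSeq Φ A) τ₂ then
            (-1 : R) ^ (I.card + r) * (-1) ^ (((Iᶜ : Finset (Fin N)) ∩ A) \ K).card * T (I ∪ K)
          else 0) := by
    unfold FlipPoly
    rw [hBG]
    rw [map_sum]
    refine Finset.sum_congr rfl fun I _ => ?_
    by_cases hI : I ∈ Gens (flipSeq Φ A) τ₂
    swap
    · rw [if_neg hI, map_zero]
      exact (Finset.sum_eq_zero fun K _ => by rw [if_neg hI]).symm
    rw [if_pos hI]
    simp only [hT]
    rw [map_mul, map_mul, map_pow, map_neg, map_one]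
    have h1 : (MvPolynomial.rename (flipVar A)) (∏ j ∈ (Iᶜ : Finset (Fin N)), (X (Sum.inl j) : R))
        = (∏ j ∈ (Iᶜ : Finset (Fin N)) ∩ A, (X (Sum.inr j) : R)) *
          ∏ j ∈ (Iᶜ : Finset (Fin N)) \ A, (X (Sum.inl j) : R) := by
      rw [map_prod]
      have e1 : ∀ j ∈ (Iᶜ : Finset (Fin N)), (MvPolynomial.rename (flipVar A)) (X (Sum.inl j) : R)
          = if j ∈ A then (X (Sum.inr j) : R) else X (Sum.inl j) := by
        intro j _
        rw [rename_X]
        by_cases hj : j ∈ A <;> simp [flipVar, hj]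
      rw [Finset.prod_congr rfl e1]
      rw [← Finset.prod_filter_mul_prod_filter_not (Iᶜ : Finset (Fin N)) (· ∈ A)]
      congr 1
      · rw [show ((Iᶜ : Finset (Fin N)).filter (· ∈ A)) = (Iᶜ : Finset (Fin N)) ∩ A from
          Finset.filter_mem_eq_inter]
        exact Finset.prod_congr rfl fun j hj => if_pos (Finset.mem_inter.mp hj).2
      · rw [show ((Iᶜ : Finset (Fin N)).filter (¬ · ∈ A)) = (Iᶜ : Finset (Fin N)) \ A by
          rw [Finset.sdiff_eq_filter]]
        exact Finset.prod_congr rfl fun j hj => by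
          rw [Finset.mem_sdiff] at hj
          exact if_neg hj.2
    have h2 : (MvPolynomial.rename (flipVar A))
          (∏ i ∈ I, ((X (Sum.inl i) : R) + X (Sum.inr i)))
        = ∏ i ∈ I, ((X (Sum.inl i) : R) + X (Sum.inr i)) := by
      rw [map_prod]
      refine Finset.prod_congr rfl fun i _ => ?_
      rw [map_add, rename_X, rename_X]
      by_cases hi : i ∈ A <;> simp [flipVar, hi, add_comm]
    rw [h1, h2]
    have h3 : (∏ j ∈ (Iᶜ : Finset (Fin N)) ∩ A, (X (Sum.inr j) : R))
        = ∑ K ∈ ((Iᶜ : Finset (Fin N)) ∩ A).powerset,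
            (∏ i ∈ K, ((X (Sum.inl i) : R) + X (Sum.inr i))) *
            ((-1 : R) ^ ((((Iᶜ : Finset (Fin N)) ∩ A) \ K).card) *
              ∏ i ∈ ((Iᶜ : Finset (Fin N)) ∩ A) \ K, (X (Sum.inl i) : R)) := by
      have e1 : ∀ j ∈ (Iᶜ : Finset (Fin N)) ∩ A, (X (Sum.inr j) : R)
          = ((X (Sum.inl j) : R) + X (Sum.inr j)) + (- X (Sum.inl j)) := fun j _ => by ring
      rw [Finset.prod_congr rfl e1, Finset.prod_add]
      refine Finset.sum_congr rfl fun K hK => ?_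
      congr 1
      have e2 : ∀ i ∈ ((Iᶜ : Finset (Fin N)) ∩ A) \ K,
          (-(X (Sum.inl i)) : R) = (-1) * X (Sum.inl i) := fun i _ => by ring
      rw [Finset.prod_congr rfl e2, Finset.prod_mul_distrib, Finset.prod_const]
    rw [h3]
    have expand : ∀ (c β γ : R) (s : Finset (Finset (Fin N))) (α : Finset (Fin N) → R),
        c * (((∑ K ∈ s, α K) * β) * γ) = ∑ K ∈ s, c * ((α K * β) * γ) := by
      intro c β γ s α
      rw [Finset.sum_mul, Finset.sum_mul, Finset.mul_sum]
    rw [expand]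
    refine Finset.sum_congr rfl fun K hK => ?_
    rw [Finset.mem_powerset] at hK
    rw [if_pos hI]
    rw [finset_id9 A I K hK, Finset.prod_union (finset_id9disj A I K hK),
      Finset.prod_union (finset_idIK A I K hK)]
    ring
  -- reindex and collect
  have hflip2 : (-1 : R) ^ A.card * FlipPoly A (BGpoly (flipSeq Φ A) τ₂)
      = ∑ J : Finset (Fin N),
          (-1 : R) ^ (J.card + r) *
            (∑ S ∈ (J ∩ A).powerset, (-1 : R) ^ S.card *
              (if (J \ A) ∪ S ∈ Gens (flipSeq Φ A) τ₂ then 1 else 0)) * T J := by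
    rw [hflip, reindex_sum A]
    rw [Finset.mul_sum]
    refine Finset.sum_congr rfl fun J _ => ?_
    rw [Finset.mul_sum]
    rw [Finset.mul_sum, Finset.sum_mul]
    refine Finset.sum_congr rfl fun S hS => ?_
    rw [Finset.mem_powerset] at hS
    by_cases hmem : (J \ A) ∪ S ∈ Gens (flipSeq Φ A) τ₂
    · rw [if_pos hmem, if_pos hmem]
      rw [finset_id1 A J S hS, finset_id3 A J S hS, finset_id4 A J S hS]
      have hc1 := Finset.card_sdiff_add_card_inter J A
      have hc2 := Finset.card_sdiff_add_card_inter A J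
      have hc3 : (A ∩ J).card = (J ∩ A).card := by rw [Finset.inter_comm]
      have hpar : (-1 : R) ^ A.card * ((-1 : R) ^ ((J \ A).card + S.card + r) *
            (-1 : R) ^ (A \ J).card)
          = (-1 : R) ^ (J.card + r) * (-1 : R) ^ S.card := by
        rw [← pow_add, ← pow_add, ← pow_add]
        exact neg_one_pow_parity _ _ (by omega)
      calc (-1 : R) ^ A.card * ((-1 : R) ^ ((J \ A).card + S.card + r) *
              (-1 : R) ^ (A \ J).card * T J)
          = ((-1 : R) ^ A.card * ((-1 : R) ^ ((J \ A).card + S.card + r) *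
              (-1 : R) ^ (A \ J).card)) * T J := by ring
        _ = ((-1 : R) ^ (J.card + r) * (-1 : R) ^ S.card) * T J := by rw [hpar]
        _ = _ := by ring
    · rw [if_neg hmem, if_neg hmem]
      ring
  -- final assembly
  have hsuf : BGpoly Φ τ₁ - BGpoly Φ τ₂ +
      (-1 : R) ^ A.card * FlipPoly A (BGpoly (flipSeq Φ A) τ₂) = 0 := by
    rw [hBG Φ τ₁, hBG Φ τ₂, hflip2]
    rw [← Finset.sum_sub_distrib, ← Finset.sum_add_distrib]
    refine Finset.sum_eq_zero fun J _ => ?_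
    have hkZ := key_count Φ hgen τ₁ τ₂ H hadj A hA J
    have hkR : ((if J ∈ Gens Φ τ₁ then (1 : R) else 0) -
          (if J ∈ Gens Φ τ₂ then (1 : R) else 0))
        + ∑ S ∈ (J ∩ A).powerset, (-1 : R) ^ S.card *
            (if (J \ A) ∪ S ∈ Gens (flipSeq Φ A) τ₂ then 1 else 0) = 0 := by
      have hcast := congrArg (fun z : ℤ => ((z : ℤ) : R)) hkZ
      push_cast at hcast
      simpa [apply_ite (fun z : ℤ => ((z : ℤ) : R))] using hcast
    have e1 : (if J ∈ Gens Φ τ₁ then (-1 : R) ^ (J.card + r) * T J else 0)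
        = (if J ∈ Gens Φ τ₁ then (1 : R) else 0) * ((-1 : R) ^ (J.card + r) * T J) := by
      split <;> simp
    have e2 : (if J ∈ Gens Φ τ₂ then (-1 : R) ^ (J.card + r) * T J else 0)
        = (if J ∈ Gens Φ τ₂ then (1 : R) else 0) * ((-1 : R) ^ (J.card + r) * T J) := by
      split <;> simp
    rw [e1, e2]
    linear_combination ((-1 : R) ^ (J.card + r) * T J) * hkR
  linear_combination hsuf
end AC
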